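/- arXiv:cs/0406044 — 10 statements merged into one kernel-verified Lean document; each statement's English description precedes it below -/
import Mathlib

section
/- A graph G satisfies F_χ(G) = 1 if and only if G is a connected bipartite graph with at least one edge (equivalently, χ(G) = 2 and G is connected). -/
open SimpleGraph

def properCol {V : Type*} (G : SimpleGraph V) (s : ℕ) (c : V → Fin s) : Prop :=
  ∀ ⦃u v⦄, G.Adj u v → c u ≠ c v

noncomputable def chrom {V : Type*} [Fintype V] (G : SimpleGraph V) : ℕ :=
  sInf {s | ∃ c : V → Fin s, properCol G s c}

def IsForcingSet {V : Type*} [Fintype V] (G : SimpleGraph V) (D : Finset V) : Prop :=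
  ∃ p : V → Fin (chrom G), ∃! c : V → Fin (chrom G),
    properCol G (chrom G) c ∧ ∀ v ∈ D, c v = p v

noncomputable def Fchi {V : Type*} [Fintype V] (G : SimpleGraph V) : ℕ :=
  sInf {k | ∃ D : Finset V, D.card = k ∧ IsForcingSet G D}

noncomputable def Npart {V : Type*} (G : SimpleGraph V) (s : ℕ) : ℕ :=
  Nat.card {r : V → V → Prop // ∃ c : V → Fin s,
    properCol G s c ∧ r = fun u v => c u = c v}

def tensorProd {V W : Type*} (G : SimpleGraph V) (H : SimpleGraph W) :
    SimpleGraph (V × W) where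
  Adj x y := G.Adj x.1 y.1 ∧ H.Adj x.2 y.2
  symm := ⟨fun _ _ h => ⟨h.1.symm, h.2.symm⟩⟩
  loopless := ⟨fun x h => G.loopless.irrefl x.1 h.1⟩

section Aux

variable {V : Type*} [Fintype V]

lemma chrom_def (G : SimpleGraph V) :
    chrom G = sInf {s | ∃ c : V → Fin s, properCol G s c} := rfl

lemma Fchi_def (G : SimpleGraph V) :
    Fchi G = sInf {k | ∃ D : Finset V, D.card = k ∧ IsForcingSet G D} := rfl

lemma exists_ne_of_two_le {s : ℕ} (hs : 2 ≤ s) (a : Fin s) : ∃ d, d ≠ a := by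
  by_contra h
  push_neg at h
  have hsub : (Finset.univ : Finset (Fin s)) ⊆ {a} := fun d _ => by simp [h d]
  have := Finset.card_le_card hsub
  simp at this
  omega

lemma exists_third {s : ℕ} (hs : 3 ≤ s) (a b : Fin s) : ∃ d, d ≠ a ∧ d ≠ b := by
  by_contra h
  push_neg at h
  have hsub : (Finset.univ : Finset (Fin s)) ⊆ {a, b} := by
    intro d _
    rcases eq_or_ne d a with h' | h'
    · simp [h']
    · simp [h d h']
  have h1 := Finset.card_le_card hsub
  have h2 : ({a, b} : Finset (Fin s)).card ≤ 2 := Finset.card_insert_le .. |>.trans (by simp)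
  simp [Finset.card_univ] at h1
  omega

lemma chrom_spec (G : SimpleGraph V) :
    ∃ c : V → Fin (chrom G), properCol G (chrom G) c := by
  classical
  have hne : {s | ∃ c : V → Fin s, properCol G s c}.Nonempty :=
    ⟨Fintype.card V, fun v => Fintype.equivFin V v,
      fun u v h hc => G.ne_of_adj h ((Fintype.equivFin V).injective hc)⟩
  exact Nat.sInf_mem hne

lemma nonempty_of_chrom_pos (G : SimpleGraph V) (h : 0 < chrom G) : Nonempty V := by
  by_contra hV
  rw [not_nonempty_iff] at hV
  have h0 : 0 ∈ {s | ∃ c : V → Fin s, properCol G s c} :=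
    ⟨fun v => isEmptyElim v, fun u v h' _ => isEmptyElim u⟩
  have := Nat.sInf_le h0
  rw [← chrom_def] at this
  omega

lemma forcing_empty_of_chrom_le_one (G : SimpleGraph V) (h : chrom G ≤ 1) :
    IsForcingSet G ∅ := by
  obtain ⟨c, hc⟩ := chrom_spec G
  have hsub : Subsingleton (Fin (chrom G)) :=
    ⟨fun a b => Fin.ext (by have := a.isLt; have := b.isLt; omega)⟩
  refine ⟨c, c, ⟨hc, fun v hv => rfl⟩, ?_⟩
  intro c' _
  funext u
  exact Subsingleton.elim _ _

lemma not_forcing_empty (G : SimpleGraph V) (h : 2 ≤ chrom G) :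
    ¬ IsForcingSet G ∅ := by
  rintro ⟨p, c, ⟨hc, -⟩, huniq⟩
  obtain ⟨v0⟩ := nonempty_of_chrom_pos G (by omega)
  obtain ⟨d, hd⟩ := exists_ne_of_two_le h (c v0)
  have hc' : properCol G (chrom G) (Equiv.swap (c v0) d ∘ c) :=
    fun u v hadj he => hc hadj ((Equiv.swap (c v0) d).injective he)
  have heq := huniq (Equiv.swap (c v0) d ∘ c)
    ⟨hc', fun v hv => absurd hv (Finset.notMem_empty v)⟩
  have hv0 := congrFun heq v0
  simp only [Function.comp_apply, Equiv.swap_apply_left] at hv0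
  exact hd hv0

lemma fin2_forced {s : ℕ} (hs : s = 2) :
    ∀ a b a' b' : Fin s, a = a' → a ≠ b → a' ≠ b' → b = b' := by
  subst hs; decide

lemma fin2_rev_ne {s : ℕ} (hs : s = 2) : ∀ a : Fin s, a.rev ≠ a := by
  subst hs; decide

lemma fin2_rev_cancel {s : ℕ} (hs : s = 2) : ∀ a b : Fin s, a.rev = b.rev → a = b := by
  subst hs; decide

lemma walk_agree (G : SimpleGraph V) (hs : chrom G = 2)
    (c c' : V → Fin (chrom G)) (hc : properCol G _ c) (hc' : properCol G _ c')
    {u v : V} (w : G.Walk u v) (huv : c u = c' u) : c v = c' v := by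
  induction w with
  | nil => exact huv
  | cons hadj p ih => exact ih (fin2_forced hs _ _ _ _ huv (hc hadj) (hc' hadj))

lemma forcing_singleton (G : SimpleGraph V) (h2 : chrom G = 2) (hconn : G.Connected) :
    ∃ D : Finset V, D.card = 1 ∧ IsForcingSet G D := by
  obtain ⟨v0⟩ := hconn.nonempty
  obtain ⟨c, hc⟩ := chrom_spec G
  refine ⟨{v0}, Finset.card_singleton v0, c, c, ⟨hc, fun _ _ => rfl⟩, ?_⟩
  rintro c' ⟨hc', hv⟩
  funext u
  exact (hconn.preconnected v0 u).elim fun w =>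
    walk_agree G h2 c' c hc' hc w (hv v0 (Finset.mem_singleton_self v0))

lemma chrom_le_two_of_forcing (G : SimpleGraph V) {v : V}
    (hf : IsForcingSet G {v}) : chrom G ≤ 2 := by
  by_contra h
  push_neg at h
  obtain ⟨p, c, ⟨hc, hpv⟩, huniq⟩ := hf
  have hconst : ∀ u, c u = c v := by
    intro u
    by_contra hne
    obtain ⟨d, hdu, hdv⟩ := exists_third (by omega) (c u) (c v)
    have hproper : properCol G (chrom G) (Equiv.swap (c u) d ∘ c) :=
      fun a b hadj he => hc hadj ((Equiv.swap (c u) d).injective he)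
    have hval : (Equiv.swap (c u) d ∘ c) v = p v := by
      simp only [Function.comp_apply]
      rw [Equiv.swap_apply_of_ne_of_ne (fun h' => hne h'.symm) (Ne.symm hdv)]
      exact hpv v (Finset.mem_singleton_self v)
    have heq := huniq (Equiv.swap (c u) d ∘ c)
      ⟨hproper, fun w hw => by rw [Finset.mem_singleton] at hw; subst hw; exact hval⟩
    have hu := congrFun heq u
    simp only [Function.comp_apply, Equiv.swap_apply_left] at hu
    exact hdu hu
  have hone : 1 ∈ {s | ∃ c : V → Fin s, properCol G s c} := by
    refine ⟨fun _ => 0, fun a b hadj _ => ?_⟩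
    exact absurd ((hconst a).trans (hconst b).symm) (hc hadj)
  have := Nat.sInf_le hone
  rw [← chrom_def] at this
  omega

lemma connected_of_forcing (G : SimpleGraph V) (h2 : chrom G = 2) {v : V}
    (hf : IsForcingSet G {v}) : G.Connected := by
  classical
  obtain ⟨p, c, ⟨hc, hpv⟩, huniq⟩ := hf
  have key : ∀ u, G.Reachable v u := by
    intro u
    by_contra hru
    set c' : V → Fin (chrom G) := fun w => if G.Reachable v w then c w else (c w).rev
      with hc'def
    have hadj_reach : ∀ {a b}, G.Adj a b → (G.Reachable v a ↔ G.Reachable v b) :=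
      fun hab => ⟨fun h => h.trans hab.reachable, fun h => h.trans hab.symm.reachable⟩
    have hproper : properCol G (chrom G) c' := by
      intro a b hab he
      simp only [hc'def] at he
      by_cases hra : G.Reachable v a
      · rw [if_pos hra, if_pos ((hadj_reach hab).1 hra)] at he
        exact hc hab he
      · rw [if_neg hra, if_neg (fun h' => hra ((hadj_reach hab).2 h'))] at he
        exact hc hab (fin2_rev_cancel h2 _ _ he)
    have hfix : ∀ w ∈ ({v} : Finset V), c' w = p w := by
      intro w hw
      rw [Finset.mem_singleton] at hw
      rw [hw]
      simp only [hc'def, if_pos (Reachable.refl v)]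
      exact hpv v (Finset.mem_singleton_self v)
    have heq := huniq c' ⟨hproper, hfix⟩
    have hu := congrFun heq u
    simp only [hc'def, if_neg hru] at hu
    exact fin2_rev_ne h2 (c u) hu
  have : Nonempty V := ⟨v⟩
  exact SimpleGraph.Connected.mk fun a b => (key a).symm.trans (key b)

end Aux

theorem stmt1 {V : Type*} [Fintype V] (G : SimpleGraph V) :
    Fchi G = 1 ↔ (chrom G = 2 ∧ G.Connected) := by
  constructor
  · intro h
    have hFs : {k | ∃ D : Finset V, D.card = k ∧ IsForcingSet G D}.Nonempty := by
      by_contra hne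
      rw [Set.not_nonempty_iff_eq_empty] at hne
      rw [Fchi_def, hne, Nat.sInf_empty] at h
      omega
    have h1 : 1 ∈ {k | ∃ D : Finset V, D.card = k ∧ IsForcingSet G D} := by
      have := Nat.sInf_mem hFs
      rwa [← Fchi_def, h] at this
    have h0 : 0 ∉ {k | ∃ D : Finset V, D.card = k ∧ IsForcingSet G D} := by
      intro h0
      have := Nat.sInf_le h0
      rw [← Fchi_def] at this
      omega
    obtain ⟨D, hD1, hDf⟩ := h1
    obtain ⟨v, rfl⟩ := Finset.card_eq_one.mp hD1
    have hge : 2 ≤ chrom G := by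
      by_contra hlt
      push_neg at hlt
      exact h0 ⟨∅, Finset.card_empty, forcing_empty_of_chrom_le_one G (by omega)⟩
    have hle : chrom G ≤ 2 := chrom_le_two_of_forcing G hDf
    have h2 : chrom G = 2 := le_antisymm hle hge
    exact ⟨h2, connected_of_forcing G h2 hDf⟩
  · rintro ⟨h2, hconn⟩
    obtain ⟨D, hD1, hDf⟩ := forcing_singleton G h2 hconn
    have h1 : 1 ∈ {k | ∃ D : Finset V, D.card = k ∧ IsForcingSet G D} := ⟨D, hD1, hDf⟩
    have hle : Fchi G ≤ 1 := by
      have := Nat.sInf_le h1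
      rwa [← Fchi_def] at this
    have hne : Fchi G ≠ 0 := by
      intro h0
      rw [Fchi_def] at h0
      rcases Nat.sInf_eq_zero.mp h0 with hm | hm
      · obtain ⟨D', hD', hf'⟩ := hm
        rw [Finset.card_eq_zero] at hD'
        subst hD'
        exact not_forcing_empty G (by omega) hf'
      · exact absurd (hm ▸ h1) (Set.notMem_empty 1)
    omega
end

section
/- For every s-chromatic graph G, F_χ(G) ≤ log₂(N(G)) + log₂(s!), where N(G) is the number of partitions of V(G) into s independent sets (equivalently, the number of proper s-colorings of G up to permutation of colors). -/
open SimpleGraph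

/-- **Halving lemma**: from a nonempty finite set of functions we can force a unique
element by pinning down values on a set `D` with `2 ^ |D| ≤ |S|`. -/
lemma halving {V : Type*} {s : ℕ} (S : Finset (V → Fin s)) (hS : S.Nonempty) :
    ∃ (D : Finset V) (c : V → Fin s), c ∈ S ∧
      (∀ c' ∈ S, (∀ v ∈ D, c' v = c v) → c' = c) ∧ 2 ^ D.card ≤ S.card := by
  classical
  revert hS
  induction S using Finset.strongInduction with
  | _ S ih =>
    intro hS
    by_cases hsub : ∀ c' ∈ S, ∀ c'' ∈ S, c' = c''
    · obtain ⟨c, hc⟩ := hS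
      exact ⟨∅, c, hc, fun c' h _ => hsub c' h c hc, by simpa using Finset.card_pos.2 ⟨c, hc⟩⟩
    · push_neg at hsub
      obtain ⟨c₁, h₁, c₂, h₂, hne⟩ := hsub
      obtain ⟨v, hv⟩ : ∃ v, c₁ v ≠ c₂ v := by
        by_contra h; push_neg at h; exact hne (funext h)
      have key : ∀ x ∈ S, ∀ y ∈ S, x v ≠ y v →
          (S.filter (fun c => c v = x v)).card ≤ (S.filter (fun c => c v = y v)).card →
          ∃ (D : Finset V) (c : V → Fin s), c ∈ S ∧
            (∀ c' ∈ S, (∀ w ∈ D, c' w = c w) → c' = c) ∧ 2 ^ D.card ≤ S.card := by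
        intro x hx y hy hxy hle
        set T := S.filter (fun c => c v = x v) with hTdef
        have hTsub : T ⊆ S := Finset.filter_subset _ _
        have hyT : y ∉ T := by
          intro hyT
          exact hxy ((Finset.mem_filter.1 hyT).2).symm
        have hTss : T ⊂ S := ⟨hTsub, fun hss => hyT (hss hy)⟩
        have hTne : T.Nonempty := ⟨x, Finset.mem_filter.2 ⟨hx, rfl⟩⟩
        obtain ⟨D, c, hcT, huniq, hcard⟩ := ih T hTss hTne
        have hdisj : Disjoint T (S.filter (fun c => c v = y v)) := by
          rw [Finset.disjoint_left]
          intro a haT haY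
          exact hxy (((Finset.mem_filter.1 haT).2).symm.trans (Finset.mem_filter.1 haY).2)
        have hsum : T.card + (S.filter (fun c => c v = y v)).card ≤ S.card := by
          rw [← Finset.card_union_of_disjoint hdisj]
          exact Finset.card_le_card
            (Finset.union_subset hTsub (Finset.filter_subset _ _))
        refine ⟨insert v D, c, hTsub hcT, ?_, ?_⟩
        · intro c' hc' hag
          have hcv : c v = x v := (Finset.mem_filter.1 hcT).2
          have hc'T : c' ∈ T := Finset.mem_filter.2
            ⟨hc', (hag v (Finset.mem_insert_self _ _)).trans hcv⟩
          exact huniq c' hc'T (fun w hw => hag w (Finset.mem_insert_of_mem hw))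
        · calc 2 ^ (insert v D).card ≤ 2 ^ (D.card + 1) :=
                Nat.pow_le_pow_right (by norm_num) (Finset.card_insert_le _ _)
          _ = 2 ^ D.card * 2 := by ring
          _ ≤ S.card := by linarith
      rcases le_total ((S.filter (fun c => c v = c₁ v)).card)
          ((S.filter (fun c => c v = c₂ v)).card) with h | h
      · exact key c₁ h₁ c₂ h₂ hv h
      · exact key c₂ h₂ c₁ h₁ (Ne.symm hv) h

/-- **Counting lemma**: the number of proper `s`-colorings is at most `Npart G s * s!`. -/
lemma count_bound {V : Type*} [Fintype V] (G : SimpleGraph V) (s : ℕ)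
    (S : Finset (V → Fin s)) (hScol : ∀ c ∈ S, properCol G s c) :
    S.card ≤ Npart G s * Nat.factorial s := by
  classical
  set rel : (V → Fin s) → (V → V → Prop) := fun c => fun u v => c u = c v with hreldef
  set I : Finset (V → V → Prop) := S.image rel with hI
  have hfib : S.card = ∑ r ∈ I, (S.filter (fun c => rel c = r)).card :=
    Finset.card_eq_sum_card_fiberwise (fun c hc => Finset.mem_image_of_mem rel hc)
  have hper : ∀ r ∈ I, (S.filter (fun c => rel c = r)).card ≤ Nat.factorial s := by
    intro r hr
    obtain ⟨c₀, hc₀S, hc₀r⟩ := Finset.mem_image.1 hr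
    set F := S.filter (fun c => rel c = r) with hF
    have hiff : ∀ c ∈ F, ∀ u w : V, (c u = c w ↔ c₀ u = c₀ w) := by
      intro c hc u w
      have h1 : rel c = rel c₀ := (Finset.mem_filter.1 hc).2.trans hc₀r.symm
      exact iff_of_eq (congrFun (congrFun h1 u) w)
    set A : Set (Fin s) := Set.range c₀ with hA
    have hrep : ∀ i : A, c₀ (i.2.choose) = i.1 := fun i => i.2.choose_spec
    let Φ : F → (A ↪ Fin s) := fun cf =>
      ⟨fun i => cf.1 (i.2.choose), by
        intro i j hij
        have := ((hiff cf.1 cf.2 _ _).1 hij)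
        apply Subtype.ext
        rw [← hrep i, ← hrep j, this]⟩
    have hΦval : ∀ (cf : F) (v : V), cf.1 v = Φ cf ⟨c₀ v, Set.mem_range_self v⟩ := by
      intro cf v
      exact ((hiff cf.1 cf.2 _ _).2 (hrep ⟨c₀ v, Set.mem_range_self v⟩)).symm
    have hΦinj : Function.Injective Φ := by
      intro a b hab
      apply Subtype.ext; funext v
      rw [hΦval a v, hΦval b v, hab]
    have hcardA : Fintype.card A ≤ s := by
      have := Fintype.card_le_of_injective (Subtype.val : A → Fin s) Subtype.val_injective
      simpa using this
    calc F.card = Fintype.card F := (Fintype.card_coe F).symm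
      _ ≤ Fintype.card (A ↪ Fin s) := Fintype.card_le_of_injective Φ hΦinj
      _ = Nat.descFactorial s (Fintype.card A) := by
          rw [Fintype.card_embedding_eq, Fintype.card_fin]
      _ ≤ Nat.factorial s := by
          have h := Nat.factorial_mul_descFactorial hcardA
          have h1 := Nat.factorial_pos (s - Fintype.card A)
          nlinarith
  have hsum : S.card ≤ I.card * Nat.factorial s := by
    rw [hfib]
    calc ∑ r ∈ I, (S.filter (fun c => rel c = r)).card
        ≤ ∑ _r ∈ I, Nat.factorial s := Finset.sum_le_sum hper
      _ = I.card * Nat.factorial s := by rw [Finset.sum_const, smul_eq_mul]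
  have hIcard : I.card ≤ Npart G s := by
    haveI : Fintype {r : V → V → Prop // ∃ c : V → Fin s,
        properCol G s c ∧ r = fun u v => c u = c v} := Fintype.ofFinite _
    let Ψ : I → {r : V → V → Prop // ∃ c : V → Fin s,
        properCol G s c ∧ r = fun u v => c u = c v} := fun ri =>
      ⟨ri.1, by
        obtain ⟨c, hcS, hcr⟩ := Finset.mem_image.1 ri.2
        exact ⟨c, hScol c hcS, hcr.symm⟩⟩
    have hΨinj : Function.Injective Ψ := by
      intro a b hab
      have h2 : (Ψ a).1 = (Ψ b).1 := congrArg Subtype.val hab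
      exact Subtype.ext h2
    calc I.card = Fintype.card I := (Fintype.card_coe I).symm
      _ ≤ Fintype.card _ := Fintype.card_le_of_injective Ψ hΨinj
      _ = Npart G s := by rw [Npart, Nat.card_eq_fintype_card]
  exact hsum.trans (Nat.mul_le_mul_right _ hIcard)

theorem stmt3 {V : Type*} [Fintype V] (G : SimpleGraph V) (s : ℕ)
    (hs : chrom G = s) :
    (Fchi G : ℝ) ≤ Real.logb 2 (Npart G s) + Real.logb 2 (Nat.factorial s) := by
  classical
  subst hs
  have hne : {t : ℕ | ∃ c : V → Fin t, properCol G t c}.Nonempty := by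
    refine ⟨Fintype.card V, fun v => Fintype.equivFin V v, ?_⟩
    intro u v huv h
    exact G.ne_of_adj huv ((Fintype.equivFin V).injective h)
  have hex : ∃ c : V → Fin (chrom G), properCol G (chrom G) c := Nat.sInf_mem hne
  obtain ⟨c₀, hc₀⟩ := hex
  set S : Finset (V → Fin (chrom G)) :=
    Finset.univ.filter (fun c => properCol G (chrom G) c) with hSdef
  have hc₀S : c₀ ∈ S := Finset.mem_filter.2 ⟨Finset.mem_univ _, hc₀⟩
  obtain ⟨D, c, hcS, huniq, hpow⟩ := halving S ⟨c₀, hc₀S⟩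
  have hforce : IsForcingSet G D := by
    refine ⟨c, c, ⟨⟨(Finset.mem_filter.1 hcS).2, fun v _ => rfl⟩, ?_⟩⟩
    rintro c' ⟨hp', ha'⟩
    exact huniq c' (Finset.mem_filter.2 ⟨Finset.mem_univ _, hp'⟩) ha'
  have hF : Fchi G ≤ D.card := Nat.sInf_le ⟨D, rfl, hforce⟩
  have hScol : ∀ c ∈ S, properCol G (chrom G) c := fun c hc => (Finset.mem_filter.1 hc).2
  have key : 2 ^ D.card ≤ Npart G (chrom G) * Nat.factorial (chrom G) :=
    le_trans hpow (count_bound G (chrom G) S hScol)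
  have hN : 1 ≤ Npart G (chrom G) := by
    haveI : Fintype {r : V → V → Prop // ∃ c : V → Fin (chrom G),
        properCol G (chrom G) c ∧ r = fun u v => c u = c v} := Fintype.ofFinite _
    rw [Npart, Nat.card_eq_fintype_card]
    exact Fintype.card_pos_iff.2 ⟨⟨fun u v => c₀ u = c₀ v, c₀, hc₀, rfl⟩⟩
  -- pass to the reals
  have hNpos : (0:ℝ) < (Npart G (chrom G) : ℝ) := by exact_mod_cast hN
  have hfpos : (0:ℝ) < (Nat.factorial (chrom G) : ℝ) := by
    exact_mod_cast Nat.factorial_pos (chrom G)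
  have h2 : ((2:ℝ)) ^ D.card ≤ (Npart G (chrom G) : ℝ) * (Nat.factorial (chrom G) : ℝ) := by
    exact_mod_cast key
  have hfc : (Fchi G : ℝ) ≤ (D.card : ℝ) := by exact_mod_cast hF
  have hlog1 : (D.card : ℝ) = Real.logb 2 ((2:ℝ) ^ D.card) := by
    rw [Real.logb_pow]
    simp
  have hlog2 : Real.logb 2 ((2:ℝ) ^ D.card) ≤
      Real.logb 2 ((Npart G (chrom G) : ℝ) * (Nat.factorial (chrom G) : ℝ)) :=
    Real.logb_le_logb_of_le one_lt_two (by positivity) h2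
  have hlog3 : Real.logb 2 ((Npart G (chrom G) : ℝ) * (Nat.factorial (chrom G) : ℝ)) =
      Real.logb 2 (Npart G (chrom G)) + Real.logb 2 (Nat.factorial (chrom G)) :=
    Real.logb_mul (ne_of_gt hNpos) (ne_of_gt hfpos)
  linarith
end

section
/- The Cartesian product G × H is 3-colorable if and only if both G and H are 3-colorable. -/
open SimpleGraph

theorem stmt8 {V W : Type*} [Nonempty V] [Nonempty W]
    (G : SimpleGraph V) (H : SimpleGraph W) :
    (∃ c : V × W → Fin 3, properCol (G.boxProd H) 3 c) ↔
      (∃ c : V → Fin 3, properCol G 3 c) ∧ (∃ c : W → Fin 3, properCol H 3 c) := by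
  constructor
  · rintro ⟨c, hc⟩
    obtain ⟨w0⟩ := ‹Nonempty W›
    obtain ⟨v0⟩ := ‹Nonempty V›
    refine ⟨⟨fun v => c (v, w0), ?_⟩, ⟨fun w => c (v0, w), ?_⟩⟩
    · intro u v huv
      exact hc (by simp [SimpleGraph.boxProd_adj, huv])
    · intro u v huv
      exact hc (by simp [SimpleGraph.boxProd_adj, huv])
  · rintro ⟨⟨cG, hG⟩, ⟨cH, hH⟩⟩
    refine ⟨fun p => cG p.1 + cH p.2, ?_⟩
    rintro ⟨u1, u2⟩ ⟨v1, v2⟩ (⟨h, rfl⟩ | ⟨h, rfl⟩) heq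
    · exact hG h (by simpa using heq)
    · exact hH h (by simpa using heq)
end

section
/- Let G be a connected graph and let p be a proper coloring of one Kₙ-layer {u} × V(Kₙ) of the categorical product G · Kₙ that assigns n pairwise distinct colors to the n vertices of that layer. Then p has at most one extension to a proper n-coloring of G · Kₙ, namely the coloring c(v,i) = p(u,i) induced by the Kₙ factor. -/
open SimpleGraph

theorem stmt9 {V : Type*} (G : SimpleGraph V) (hconn : G.Connected)
    (n : ℕ) (u : V) (p : Fin n → Fin n) (hp : Function.Injective p)
    (c : V × Fin n → Fin n)
    (hc : properCol (tensorProd G (⊤ : SimpleGraph (Fin n))) n c)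
    (hext : ∀ i : Fin n, c (u, i) = p i) :
    ∀ (v : V) (i : Fin n), c (v, i) = p i := by
  have key : ∀ v w, G.Adj v w → (∀ i, c (v, i) = p i) → ∀ j, c (w, j) = p j := by
    intro v w hvw hv j
    have hpsurj : Function.Surjective p := Finite.surjective_of_injective hp
    obtain ⟨i, hi⟩ := hpsurj (c (w, j))
    by_contra h
    have hij : i ≠ j := by
      intro e; exact h (e ▸ hi).symm
    have adj : (tensorProd G (⊤ : SimpleGraph (Fin n))).Adj (v, i) (w, j) :=
      ⟨hvw, by simpa using hij⟩
    exact hc adj (by rw [hv i, hi])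
  suffices H : ∀ a b : V, G.Reachable a b → (∀ i, c (a, i) = p i) → ∀ i, c (b, i) = p i from
    fun v => H u v (hconn u v) hext
  intro a b hr
  obtain ⟨w⟩ := hr
  induction w with
  | nil => exact id
  | cons h w ih => exact fun ha => ih (key _ _ h ha)
end

section
/- Every proper 3-coloring of the categorical product K₃ · K₃ is induced by one of the two factors; that is, for every proper 3-coloring c of K₃ · K₃, either c(i,j) depends only on i, or c(i,j) depends only on j. -/
open SimpleGraph

set_option maxRecDepth 100000 in
set_option synthInstance.maxHeartbeats 1000000 in
set_option synthInstance.maxSize 2000 in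
lemma key : ∀ x00 x01 x02 x10 x11 x12 x20 x21 x22 : Fin 3,
    x00 ≠ x11 → x00 ≠ x12 → x00 ≠ x21 → x00 ≠ x22 →
    x01 ≠ x10 → x01 ≠ x12 → x01 ≠ x20 → x01 ≠ x22 →
    x02 ≠ x10 → x02 ≠ x11 → x02 ≠ x20 → x02 ≠ x21 →
    x10 ≠ x21 → x10 ≠ x22 → x11 ≠ x20 → x11 ≠ x22 →
    x12 ≠ x20 → x12 ≠ x21 →
    (x00 = x01 ∧ x00 = x02 ∧ x10 = x11 ∧ x10 = x12 ∧ x20 = x21 ∧ x20 = x22) ∨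
    (x00 = x10 ∧ x00 = x20 ∧ x01 = x11 ∧ x01 = x21 ∧ x02 = x12 ∧ x02 = x22) := by
  decide

theorem stmt10
    (c : Fin 3 × Fin 3 → Fin 3)
    (hc : properCol (tensorProd (⊤ : SimpleGraph (Fin 3)) (⊤ : SimpleGraph (Fin 3))) 3 c) :
    (∀ (i j j' : Fin 3), c (i, j) = c (i, j')) ∨
    (∀ (i i' j : Fin 3), c (i, j) = c (i', j)) := by
  have adj : ∀ u v : Fin 3 × Fin 3, u.1 ≠ v.1 → u.2 ≠ v.2 → c u ≠ c v :=
    fun u v h1 h2 => hc ⟨h1, h2⟩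
  have h := key (c (0,0)) (c (0,1)) (c (0,2)) (c (1,0)) (c (1,1)) (c (1,2))
      (c (2,0)) (c (2,1)) (c (2,2))
      (adj _ _ (by decide) (by decide)) (adj _ _ (by decide) (by decide))
      (adj _ _ (by decide) (by decide)) (adj _ _ (by decide) (by decide))
      (adj _ _ (by decide) (by decide)) (adj _ _ (by decide) (by decide))
      (adj _ _ (by decide) (by decide)) (adj _ _ (by decide) (by decide))
      (adj _ _ (by decide) (by decide)) (adj _ _ (by decide) (by decide))
      (adj _ _ (by decide) (by decide)) (adj _ _ (by decide) (by decide))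
      (adj _ _ (by decide) (by decide)) (adj _ _ (by decide) (by decide))
      (adj _ _ (by decide) (by decide)) (adj _ _ (by decide) (by decide))
      (adj _ _ (by decide) (by decide)) (adj _ _ (by decide) (by decide))
  clear adj hc
  rcases h with ⟨a,b,d,e,f,g⟩ | ⟨a,b,d,e,f,g⟩
  · left; intro i j j'; fin_cases i <;> fin_cases j <;> fin_cases j' <;> simp_all
  · right; intro i i' j; fin_cases i <;> fin_cases i' <;> fin_cases j <;> simp_all
end

section
/- (Greenwell–Lovász) If G is a connected graph with χ(G) > n, then the categorical product G · Kₙ is uniquely n-colorable: χ(G · Kₙ) = n and every proper n-coloring of G · Kₙ equals the projection (v,i) ↦ i up to a permutation of colors. -/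
open SimpleGraph

theorem stmt11 {V : Type*} [Fintype V] (G : SimpleGraph V) (n : ℕ)
    (hconn : G.Connected) (hchi : n < chrom G) :
    chrom (tensorProd G (⊤ : SimpleGraph (Fin n))) = n ∧
    ∀ c : V × Fin n → Fin n,
      properCol (tensorProd G (⊤ : SimpleGraph (Fin n))) n c →
      ∃ σ : Equiv.Perm (Fin n), ∀ (v : V) (i : Fin n), c (v, i) = σ i := by
  -- V is nonempty
  have hVne : Nonempty V := by
    by_contra h
    rw [not_nonempty_iff] at h
    have h0 : (0 : ℕ) ∈ {s | ∃ c : V → Fin s, properCol G s c} :=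
      ⟨fun v => (h.false v).elim, fun u v _ => (h.false u).elim⟩
    have := Nat.sInf_le h0
    simp only [chrom] at hchi
    omega
  -- G has no proper n-coloring
  have hno : ¬ ∃ f : V → Fin n, properCol G n f := by
    rintro ⟨f, hf⟩
    have : chrom G ≤ n := Nat.sInf_le ⟨f, hf⟩
    omega
  obtain ⟨v₀⟩ := hVne
  -- key lemma: every proper n-coloring of the tensor product is σ ∘ proj
  have key : ∀ c : V × Fin n → Fin n,
      properCol (tensorProd G (⊤ : SimpleGraph (Fin n))) n c →
      ∃ σ : Equiv.Perm (Fin n), ∀ (v : V) (i : Fin n), c (v, i) = σ i := by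
    intro c hc
    by_cases hinj : ∀ v, Function.Injective (fun i => c (v, i))
    · -- all vertices rainbow: adjacent vertices get the same permutation
      have hbij : ∀ v, Function.Bijective (fun i => c (v, i)) :=
        fun v => Finite.injective_iff_bijective.mp (hinj v)
      have hstep : ∀ u v, G.Adj u v → ∀ i, c (u, i) = c (v, i) := by
        intro u v huv i
        obtain ⟨j, hj⟩ := (hbij u).2 (c (v, i))
        by_contra hne
        have hji : j ≠ i := by
          rintro rfl
          exact hne hj
        exact hc (u := (u, j)) (v := (v, i)) ⟨huv, by simpa using hji⟩ hj
      have hall : ∀ v, ∀ i, c (v, i) = c (v₀, i) := by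
        intro v
        have hr : G.Reachable v v₀ := hconn v v₀
        obtain ⟨w⟩ := hr
        induction w with
        | nil => intro i; rfl
        | cons h p ih => intro i; exact (hstep _ _ h i).trans (ih i)
      refine ⟨Equiv.ofBijective _ (hbij v₀), fun v i => hall v i⟩
    · -- some vertex is not rainbow: propagate and build a proper n-coloring of G
      push_neg at hinj
      obtain ⟨u₀, hu₀⟩ := hinj
      have adjstep : ∀ u v, G.Adj u v →
          ¬ Function.Injective (fun i => c (u, i)) →
          ¬ Function.Injective (fun i => c (v, i)) := by
        intro u v huv hu
        obtain ⟨i, j, hij, hne⟩ := Function.not_injective_iff.mp hu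
        intro hv
        have hsurj := (Finite.injective_iff_surjective.mp hv)
        obtain ⟨k, hk⟩ := hsurj (c (u, i))
        have : k ≠ i ∨ k ≠ j := by
          by_contra hcon
          push_neg at hcon
          exact hne (hcon.1 ▸ hcon.2 ▸ rfl)
        rcases this with hki | hkj
        · exact hc (u := (v, k)) (v := (u, i)) ⟨huv.symm, by simpa using hki⟩ hk
        · exact hc (u := (v, k)) (v := (u, j)) ⟨huv.symm, by simpa using hkj⟩ (hk.trans hij)
      have hprop : ∀ v, ¬ Function.Injective (fun i => c (v, i)) := by
        intro v
        obtain ⟨w⟩ := hconn u₀ v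
        induction w with
        | nil => exact hu₀
        | cons h p ih => exact ih (adjstep _ _ h hu₀)
      exfalso
      -- each vertex has an avoided-at-neighbors color
      have hav : ∀ v, ∃ a : Fin n, (∃ i, c (v, i) = a) ∧
          ∀ w, G.Adj v w → ∀ k, c (w, k) ≠ a := by
        intro v
        obtain ⟨i, j, hij, hne⟩ := Function.not_injective_iff.mp (hprop v)
        refine ⟨c (v, i), ⟨i, rfl⟩, fun w hvw k hk => ?_⟩
        have : k ≠ i ∨ k ≠ j := by
          by_contra hcon
          push_neg at hcon
          exact hne (hcon.1 ▸ hcon.2 ▸ rfl)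
        rcases this with hki | hkj
        · exact hc (u := (w, k)) (v := (v, i)) ⟨hvw.symm, by simpa using hki⟩ hk
        · exact hc (u := (w, k)) (v := (v, j)) ⟨hvw.symm, by simpa using hkj⟩ (hk.trans hij)
      choose f hf₁ hf₂ using hav
      refine hno ⟨f, fun u v huv => ?_⟩
      obtain ⟨i, hi⟩ := hf₁ v
      intro heq
      exact hf₂ u v huv i (hi.trans heq.symm)
  refine ⟨?_, key⟩
  -- chromatic number of the product is n
  have hle : chrom (tensorProd G (⊤ : SimpleGraph (Fin n))) ≤ n := by
    apply Nat.sInf_le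
    exact ⟨fun x => x.2, fun a b hab => by
      have : a.2 ≠ b.2 := by simpa using hab.2
      exact this⟩
  refine le_antisymm hle ?_
  by_contra hlt
  push_neg at hlt
  set s := chrom (tensorProd G (⊤ : SimpleGraph (Fin n))) with hs
  have hmem : s ∈ {m | ∃ c : V × Fin n → Fin m,
      properCol (tensorProd G (⊤ : SimpleGraph (Fin n))) m c} := by
    exact Nat.sInf_mem ⟨n, fun x => x.2, fun a b hab => by
      have : a.2 ≠ b.2 := by simpa using hab.2
      exact this⟩
  obtain ⟨c, hcp⟩ := hmem
  have hsn : s ≤ n := le_of_lt hlt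
  set c' : V × Fin n → Fin n := fun x => Fin.castLE hsn (c x) with hc'
  have hc'p : properCol (tensorProd G (⊤ : SimpleGraph (Fin n))) n c' := by
    intro a b hab heq
    exact hcp hab (Fin.castLE_injective hsn heq)
  obtain ⟨σ, hσ⟩ := key c' hc'p
  have := hσ v₀ (σ.symm ⟨s, hlt⟩)
  rw [Equiv.apply_symm_apply] at this
  have hval : (c' (v₀, σ.symm ⟨s, hlt⟩)).val < s := (c _).isLt
  rw [this] at hval
  exact lt_irrefl s hval
end

section
/- For every k ≥ 1 there exists a 3-chromatic graph G_k on 4k+2 vertices with F_χ(G_k) = 2 whose number of proper 3-colorings, counted up to permutation of colors, equals 2^{k−1} + 1. -/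
open SimpleGraph

namespace S12

abbrev Vk (k : ℕ) := Bool ⊕ (Fin k × Fin 4)

def E0 {k : ℕ} : Vk k → Vk k → Prop
  | Sum.inl b, Sum.inr (_, r) => (b = false ∧ r ≠ 3) ∨ (b = true ∧ r ≠ 1)
  | Sum.inr (i, r), Sum.inr (j, s) =>
      i = j ∧ ((r = 0 ∧ s = 1) ∨ (r = 2 ∧ s = 3) ∨ (r = 1 ∧ s = 3))
  | _, _ => False

def Gk (k : ℕ) : SimpleGraph (Vk k) where
  Adj a b := E0 a b ∨ E0 b a
  symm := by constructor; intro a b h; tauto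
  loopless := by
    constructor
    rintro (b | ⟨i, r⟩) h
    · simp [E0] at h
    · rcases h with h | h <;>
      · obtain ⟨-, h⟩ := h
        rcases h with ⟨h1, h2⟩ | ⟨h1, h2⟩ | ⟨h1, h2⟩ <;> rw [h1] at h2 <;> exact absurd h2 (by decide)

abbrev P (x y B C A' C' : Fin 3) : Prop :=
  x≠B ∧ x≠C ∧ B≠C ∧ y≠A' ∧ y≠C' ∧ A'≠C' ∧ x≠A' ∧ B≠y ∧ C≠C'

def solve (x y : Fin 3) (ε : Bool) : Fin 3 × Fin 3 × Fin 3 × Fin 3 :=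
  if x = y then (if ε then (x+2,x+1,x+1,x+2) else (x+1,x+2,x+2,x+1))
  else (-(x+y), y, -(x+y), x)

lemma key : ∀ x y B C A' C' : Fin 3,
    P x y B C A' C' ↔ ∃ ε : Bool, (B,C,A',C') = solve x y ε := by decide

def part (t : Fin 3 × Fin 3 × Fin 3 × Fin 3) : Fin 4 → Fin 3
  | 0 => t.1
  | 1 => t.2.1
  | 2 => t.2.2.1
  | 3 => t.2.2.2

def col {k : ℕ} (x y : Fin 3) (ε : Fin k → Bool) : Vk k → Fin 3
  | Sum.inl false => x
  | Sum.inl true => y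
  | Sum.inr (i, r) => part (solve x y (ε i)) r

def Pc {k : ℕ} (c : Vk k → Fin 3) : Prop :=
  ∀ i : Fin k, P (c (Sum.inl false)) (c (Sum.inl true))
    (c (Sum.inr (i,0))) (c (Sum.inr (i,1))) (c (Sum.inr (i,2))) (c (Sum.inr (i,3)))

lemma proper_iff {k : ℕ} (c : Vk k → Fin 3) : properCol (Gk k) 3 c ↔ Pc c := by
  constructor
  · intro h i
    have hub : (Gk k).Adj (Sum.inl false) (Sum.inr (i,0)) := Or.inl (Or.inl ⟨rfl, by decide⟩)
    have huc : (Gk k).Adj (Sum.inl false) (Sum.inr (i,1)) := Or.inl (Or.inl ⟨rfl, by decide⟩)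
    have hbc : (Gk k).Adj (Sum.inr (i,(0:Fin 4))) (Sum.inr (i,1)) := Or.inl ⟨rfl, Or.inl ⟨rfl, rfl⟩⟩
    have hva : (Gk k).Adj (Sum.inl true) (Sum.inr (i,2)) := Or.inl (Or.inr ⟨rfl, by decide⟩)
    have hvc : (Gk k).Adj (Sum.inl true) (Sum.inr (i,3)) := Or.inl (Or.inr ⟨rfl, by decide⟩)
    have hac : (Gk k).Adj (Sum.inr (i,(2:Fin 4))) (Sum.inr (i,3)) :=
      Or.inl ⟨rfl, Or.inr (Or.inl ⟨rfl, rfl⟩)⟩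
    have hua : (Gk k).Adj (Sum.inl false) (Sum.inr (i,2)) := Or.inl (Or.inl ⟨rfl, by decide⟩)
    have hvb : (Gk k).Adj (Sum.inl true) (Sum.inr (i,0)) := Or.inl (Or.inr ⟨rfl, by decide⟩)
    have hcc : (Gk k).Adj (Sum.inr (i,(1:Fin 4))) (Sum.inr (i,3)) :=
      Or.inl ⟨rfl, Or.inr (Or.inr ⟨rfl, rfl⟩)⟩
    exact ⟨h hub, h huc, h hbc, h hva, h hvc, h hac, h hua, (h hvb).symm, h hcc⟩
  · intro h a b hab
    have main : ∀ a b : Vk k, E0 a b → c a ≠ c b := by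
      rintro (ba | ⟨i, r⟩) (bb | ⟨j, s⟩) he <;> simp only [E0] at he
      · obtain ⟨H1,H2,H3,H4,H5,H6,H7,H8,H9⟩ := h j
        rcases he with ⟨hb, hr⟩ | ⟨hb, hr⟩ <;> subst hb <;> fin_cases s
        · exact H1
        · exact H2
        · exact H7
        · exact absurd rfl hr
        · exact H8.symm
        · exact absurd rfl hr
        · exact H4
        · exact H5
      · obtain ⟨heq, he⟩ := he
        subst heq
        obtain ⟨H1,H2,H3,H4,H5,H6,H7,H8,H9⟩ := h i
        rcases he with ⟨h1, h2⟩ | ⟨h1, h2⟩ | ⟨h1, h2⟩ <;> subst h1 <;> subst h2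
        · exact H3
        · exact H6
        · exact H9
    rcases hab with hab | hab
    · exact main _ _ hab
    · exact (main _ _ hab).symm

end S12

namespace S12

def rel {V : Type*} (c : V → Fin 3) : V → V → Prop := fun a b => c a = c b

lemma Pc_col {k : ℕ} (x y : Fin 3) (ε : Fin k → Bool) : Pc (col x y ε) := by
  intro i
  have := (key x y (solve x y (ε i)).1 (solve x y (ε i)).2.1
      (solve x y (ε i)).2.2.1 (solve x y (ε i)).2.2.2).mpr ⟨ε i, rfl⟩
  exact this

lemma col_eq {k : ℕ} (c : Vk k → Fin 3) (h : Pc c) :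
    ∃ x y ε, c = col x y ε := by
  refine ⟨c (Sum.inl false), c (Sum.inl true), fun i => Classical.choose ((key _ _ _ _ _ _).mp (h i)), ?_⟩
  funext v
  match v with
  | Sum.inl false => rfl
  | Sum.inl true => rfl
  | Sum.inr (i, r) =>
    have hs := Classical.choose_spec ((key (c (Sum.inl false)) (c (Sum.inl true))
      (c (Sum.inr (i,0))) (c (Sum.inr (i,1))) (c (Sum.inr (i,2))) (c (Sum.inr (i,3)))).mp (h i))
    have h0 := congrArg Prod.fst hs
    have h1 := congrArg (fun t => t.2.1) hs
    have h2 := congrArg (fun t => t.2.2.1) hs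
    have h3 := congrArg (fun t => t.2.2.2) hs
    fin_cases r
    · exact h0
    · exact h1
    · exact h2
    · exact h3

def mp4 (π : Fin 3 → Fin 3) (t : Fin 3 × Fin 3 × Fin 3 × Fin 3) :
    Fin 3 × Fin 3 × Fin 3 × Fin 3 := (π t.1, π t.2.1, π t.2.2.1, π t.2.2.2)

lemma rel_comp {V : Type*} (π : Fin 3 → Fin 3) (hπ : Function.Injective π) (c : V → Fin 3) :
    rel (fun v => π (c v)) = rel c := by
  funext a b
  exact propext ⟨fun hh => hπ hh, fun hh => congrArg π hh⟩

lemma col_comp {k : ℕ} (π : Fin 3 → Fin 3) (x y x' y' : Fin 3) (ε ε' : Fin k → Bool)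
    (hx : π x = x') (hy : π y = y')
    (hs : ∀ i, mp4 π (solve x y (ε i)) = solve x' y' (ε' i)) :
    (fun v => π (col x y ε v)) = col x' y' ε' := by
  funext v
  match v with
  | Sum.inl false => exact hx
  | Sum.inl true => exact hy
  | Sum.inr (i, r) =>
    have h0 := congrArg Prod.fst (hs i)
    have h1 := congrArg (fun t => t.2.1) (hs i)
    have h2 := congrArg (fun t => t.2.2.1) (hs i)
    have h3 := congrArg (fun t => t.2.2.2) (hs i)
    fin_cases r
    · exact h0
    · exact h1
    · exact h2
    · exact h3

def πd (x y x' y' : Fin 3) : Fin 3 → Fin 3 :=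
  fun t => if t = x then x' else if t = y then y' else -(x'+y')

lemma factA : ∀ x y x' y' : Fin 3, x ≠ y → x' ≠ y' →
    Function.Injective (πd x y x' y') ∧ πd x y x' y' x = x' ∧ πd x y x' y' y = y' ∧
    ∀ ε ε' : Bool, mp4 (πd x y x' y') (solve x y ε) = solve x' y' ε' := by decide

lemma factB1 : ∀ x x' : Fin 3, Function.Injective (fun t : Fin 3 => t + (x'-x)) ∧
    (x + (x'-x) = x') ∧ ∀ ε : Bool,
      mp4 (fun t => t + (x'-x)) (solve x x ε) = solve x' x' ε := by decide

lemma factB2 : ∀ x x' : Fin 3, Function.Injective (fun t : Fin 3 => x'+x-t) ∧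
    (x'+x-x = x') ∧ ∀ ε : Bool,
      mp4 (fun t => x'+x-t) (solve x x ε) = solve x' x' (!ε) := by decide

lemma rel_ne_case {k : ℕ} (x y x' y' : Fin 3) (hxy : x ≠ y) (hxy' : x' ≠ y')
    (ε ε' : Fin k → Bool) : rel (col x y ε) = rel (col x' y' ε') := by
  obtain ⟨hinj, hx, hy, hsol⟩ := factA x y x' y' hxy hxy'
  rw [← col_comp (πd x y x' y') x y x' y' ε ε' hx hy (fun i => hsol (ε i) (ε' i))]
  exact (rel_comp _ hinj _).symm

lemma rel_eq_case {k : ℕ} (x x' : Fin 3) (ε : Fin k → Bool) :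
    rel (col x x ε) = rel (col x' x' ε) := by
  obtain ⟨hinj, hx, hsol⟩ := factB1 x x'
  rw [← col_comp _ x x x' x' ε ε hx hx (fun i => hsol (ε i))]
  exact (rel_comp _ hinj _).symm

lemma rel_eq_flip {k : ℕ} (x x' : Fin 3) (ε : Fin k → Bool) :
    rel (col x x ε) = rel (col x' x' (fun i => !(ε i))) := by
  obtain ⟨hinj, hx, hsol⟩ := factB2 x x'
  rw [← col_comp _ x x x' x' ε _ hx hx (fun i => hsol (ε i))]
  exact (rel_comp _ hinj _).symm

lemma rel_ne_of_cases {k : ℕ} (x x' y' : Fin 3) (hxy' : x' ≠ y') (ε ε' : Fin k → Bool) :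
    rel (col x x ε) ≠ rel (col x' y' ε') := by
  intro h
  have h2 := congrFun (congrFun h (Sum.inl false)) (Sum.inl true)
  have : col x' y' ε' (Sum.inl false) = col x' y' ε' (Sum.inl true) := by
    rw [show (col x' y' ε' (Sum.inl false) = col x' y' ε' (Sum.inl true)) = rel (col x' y' ε') (Sum.inl false) (Sum.inl true) from rfl, ← h2]
    rfl
  exact hxy' this

lemma bval : ∀ a b : Bool, ((solve 0 0 a).1 = (solve 0 0 b).1) ↔ a = b := by decide

lemma rel_eq_inj {k : ℕ} (ε ε' : Fin k → Bool) (hk : 0 < k)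
    (h0 : ε ⟨0, hk⟩ = false) (h0' : ε' ⟨0, hk⟩ = false)
    (h : rel (col 0 0 ε) = rel (col 0 0 ε')) : ε = ε' := by
  funext i
  have h2 := congrFun (congrFun h (Sum.inr (i, 0))) (Sum.inr (⟨0, hk⟩, 0))
  have lhs : rel (col 0 0 ε) (Sum.inr (i, 0)) (Sum.inr (⟨0, hk⟩, 0)) ↔ ε i = false := by
    show ((solve 0 0 (ε i)).1 = (solve 0 0 (ε ⟨0, hk⟩)).1) ↔ _
    rw [h0, bval]
  have rhs : rel (col 0 0 ε') (Sum.inr (i, 0)) (Sum.inr (⟨0, hk⟩, 0)) ↔ ε' i = false := by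
    show ((solve 0 0 (ε' i)).1 = (solve 0 0 (ε' ⟨0, hk⟩)).1) ↔ _
    rw [h0', bval]
  have hiff : ε i = false ↔ ε' i = false := by
    constructor
    · intro hi; exact rhs.mp (h2 ▸ lhs.mpr hi)
    · intro hi; exact lhs.mp (h2.symm ▸ rhs.mpr hi)
  cases hεi : ε i <;> cases hεi' : ε' i <;> simp_all
end S12

namespace S12

lemma count (m : ℕ) :
    Nat.card {r : Vk (m+1) → Vk (m+1) → Prop // ∃ c : Vk (m+1) → Fin 3,
      properCol (Gk (m+1)) 3 c ∧ r = fun u v => c u = c v} = 2 ^ m + 1 := by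
  have hz : (⟨0, Nat.succ_pos m⟩ : Fin (m+1)) = 0 := rfl
  set X := {f : Fin (m+1) → Bool // f 0 = false} with hX
  set Sub := {r : Vk (m+1) → Vk (m+1) → Prop // ∃ c : Vk (m+1) → Fin 3,
      properCol (Gk (m+1)) 3 c ∧ r = fun u v => c u = c v} with hSub
  have mk : ∀ (x y : Fin 3) (ε : Fin (m+1) → Bool), ∃ c : Vk (m+1) → Fin 3,
      properCol (Gk (m+1)) 3 c ∧ rel (col x y ε) = fun u v => c u = c v :=
    fun x y ε => ⟨col x y ε, (proper_iff _).mpr (Pc_col x y ε), rfl⟩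
  let F : Option X → Sub := fun o =>
    match o with
    | none => ⟨rel (col 0 1 (fun _ => false)), mk 0 1 _⟩
    | some f => ⟨rel (col 0 0 f.1), mk 0 0 _⟩
  have hinj : Function.Injective F := by
    rintro (_ | f) (_ | f') h
    · rfl
    · exact absurd (congrArg Subtype.val h).symm (rel_ne_of_cases 0 0 1 (by decide) f'.1 _)
    · exact absurd (congrArg Subtype.val h) (rel_ne_of_cases 0 0 1 (by decide) f.1 _)
    · have := rel_eq_inj f.1 f'.1 (Nat.succ_pos m) f.2 f'.2
        (congrArg Subtype.val h)
      exact congrArg some (Subtype.ext this)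
  have hsurj : Function.Surjective F := by
    rintro ⟨r, c, hc, rfl⟩
    obtain ⟨x, y, ε, rfl⟩ := col_eq c ((proper_iff c).mp hc)
    by_cases hxy : x = y
    · subst hxy
      cases hε : ε ⟨0, Nat.succ_pos m⟩
      · exact ⟨some ⟨ε, hε⟩, Subtype.ext (rel_eq_case 0 x ε)⟩
      · refine ⟨some ⟨fun i => !(ε i), by show (!(ε ⟨0, Nat.succ_pos m⟩)) = false; rw [hε]; rfl⟩, Subtype.ext ?_⟩
        exact (rel_eq_flip x 0 ε).symm
    · exact ⟨none, Subtype.ext (rel_ne_case 0 1 x y (by decide) hxy _ ε)⟩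
  have : Nat.card Sub = Nat.card (Option X) :=
    (Nat.card_congr (Equiv.ofBijective F ⟨hinj, hsurj⟩)).symm
  rw [this, Nat.card_eq_fintype_card, Fintype.card_option]
  congr 1
  have XE : X ≃ (Fin m → Bool) :=
    { toFun := fun f j => f.1 j.succ
      invFun := fun g => ⟨Fin.cons false g, Fin.cons_zero _ _⟩
      left_inv := by
        rintro ⟨f, hf⟩
        apply Subtype.ext
        funext v
        refine Fin.cases ?_ (fun j => ?_) v <;> simp [hf]
      right_inv := by intro g; funext j; simp }
  rw [Fintype.card_congr XE, Fintype.card_fun, Fintype.card_bool, Fintype.card_fin]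

end S12

namespace S12

def ek (k : ℕ) : Vk k ≃ Fin (4*k+2) :=
  ((Equiv.sumCongr finTwoEquiv.symm finProdFinEquiv).trans finSumFinEquiv).trans
    (finCongr (by omega))

def G' (k : ℕ) : SimpleGraph (Fin (4*k+2)) := (Gk k).comap ⇑(ek k).symm

lemma proper_transfer {k s : ℕ} (c : Fin (4*k+2) → Fin s) :
    properCol (G' k) s c ↔ properCol (Gk k) s (fun v => c (ek k v)) := by
  constructor
  · intro h x y hxy
    exact h (show (Gk k).Adj ((ek k).symm (ek k x)) ((ek k).symm (ek k y)) by simpa using hxy)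
  · intro h a b hab
    have := h hab
    simpa using this

lemma adj_ub {k : ℕ} (hk : 0 < k) :
    (Gk k).Adj (Sum.inl false) (Sum.inr (⟨0,hk⟩, 0)) := Or.inl (Or.inl ⟨rfl, by decide⟩)
lemma adj_uc {k : ℕ} (hk : 0 < k) :
    (Gk k).Adj (Sum.inl false) (Sum.inr (⟨0,hk⟩, 1)) := Or.inl (Or.inl ⟨rfl, by decide⟩)
lemma adj_bc {k : ℕ} (hk : 0 < k) :
    (Gk k).Adj (Sum.inr (⟨0,hk⟩, (0:Fin 4))) (Sum.inr (⟨0,hk⟩, 1)) :=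
  Or.inl ⟨rfl, Or.inl ⟨rfl, rfl⟩⟩

lemma c0_proper (k : ℕ) (ε : Fin k → Bool) (x y : Fin 3) :
    properCol (G' k) 3 (fun a => col x y ε ((ek k).symm a)) := by
  rw [proper_transfer]
  have : (fun v => col x y ε ((ek k).symm (ek k v))) = col x y ε := by
    funext v; rw [Equiv.symm_apply_apply]
  rw [this]
  exact (proper_iff _).mpr (Pc_col _ _ _)

lemma chrom_eq (k : ℕ) (hk : 0 < k) : chrom (G' k) = 3 := by
  have h3 : 3 ∈ {s | ∃ c : Fin (4*k+2) → Fin s, properCol (G' k) s c} :=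
    ⟨fun a => col 0 1 (fun _ => false) ((ek k).symm a), c0_proper k _ 0 1⟩
  refine le_antisymm (Nat.sInf_le h3) (le_csInf ⟨3, h3⟩ ?_)
  rintro s ⟨c, hc⟩
  have hc' := (proper_transfer c).mp hc
  set c' := fun v => c (ek k v) with hc'def
  have d1 : c' (Sum.inl false) ≠ c' (Sum.inr (⟨0,hk⟩, 0)) := hc' (adj_ub hk)
  have d2 : c' (Sum.inl false) ≠ c' (Sum.inr (⟨0,hk⟩, 1)) := hc' (adj_uc hk)
  have d3 : c' (Sum.inr (⟨0,hk⟩, (0:Fin 4))) ≠ c' (Sum.inr (⟨0,hk⟩, 1)) := hc' (adj_bc hk)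
  have hinj : Function.Injective
      (![c' (Sum.inl false), c' (Sum.inr (⟨0,hk⟩, 0)), c' (Sum.inr (⟨0,hk⟩, 1))] : Fin 3 → Fin s) := by
    intro a b hab
    fin_cases a <;> fin_cases b <;> simp_all
  simpa using Fintype.card_le_of_injective _ hinj

lemma solve01 : ∀ a : Bool, solve 0 1 a = solve 0 1 false := by decide

lemma col01_indep {k : ℕ} (ε : Fin k → Bool) :
    col 0 1 ε = col (k:=k) 0 1 (fun _ => false) := by
  funext v
  match v with
  | Sum.inl false => rfl
  | Sum.inl true => rfl
  | Sum.inr (i, r) => show part (solve 0 1 (ε i)) r = _; rw [solve01 (ε i)]; rfl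

lemma swapF1 : ∀ v0 : Fin 3, Equiv.swap (v0+1) (v0+2) v0 = v0 := by decide
lemma swapF2 : ∀ v0 : Fin 3, Equiv.swap (v0+1) (v0+2) (v0+1) = v0+2 := by decide
lemma swapF3 : ∀ v0 : Fin 3, v0 + 2 ≠ v0 + 1 := by decide

lemma fchi_eq (k : ℕ) (hk : 0 < k) : Fchi (G' k) = 2 := by
  have hne : ek k (Sum.inl false) ≠ ek k (Sum.inl true) :=
    (ek k).injective.ne (by simp)
  have h2 : 2 ∈ {n | ∃ D : Finset (Fin (4*k+2)), D.card = n ∧ IsForcingSet (G' k) D} := by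
    refine ⟨{ek k (Sum.inl false), ek k (Sum.inl true)}, Finset.card_pair hne, ?_⟩
    unfold IsForcingSet
    rw [chrom_eq k hk]
    refine ⟨fun a => if a = ek k (Sum.inl true) then (1:Fin 3) else 0,
      fun a => col 0 1 (fun _ => false) ((ek k).symm a), ⟨c0_proper k _ 0 1, ?_⟩, ?_⟩
    · intro v hv
      rcases Finset.mem_insert.mp hv with h | h
      · subst h
        simp [Equiv.symm_apply_apply, hne]
        rfl
      · rw [Finset.mem_singleton] at h
        subst h
        simp [Equiv.symm_apply_apply]
        rfl
    · rintro c ⟨hc, hD⟩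
      have hc' := (proper_transfer c).mp hc
      obtain ⟨x, y, ε, hcol⟩ := col_eq _ ((proper_iff _).mp hc')
      have hx : x = 0 := by
        have h2 := hD (ek k (Sum.inl false)) (Finset.mem_insert_self _ _)
        simp only [if_neg hne] at h2
        exact (congrFun hcol (Sum.inl false)).symm.trans h2
      have hy : y = 1 := by
        have h2 := hD (ek k (Sum.inl true))
          (Finset.mem_insert.mpr (Or.inr (Finset.mem_singleton_self _)))
        simp only [if_pos] at h2
        exact (congrFun hcol (Sum.inl true)).symm.trans h2
      subst hx; subst hy
      rw [col01_indep] at hcol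
      funext a
      have := congrFun hcol ((ek k).symm a)
      rwa [Equiv.apply_symm_apply] at this
  refine le_antisymm (Nat.sInf_le h2) (le_csInf ⟨2, h2⟩ ?_)
  rintro n ⟨D, hcard, hforce⟩
  by_contra hlt
  push_neg at hlt
  unfold IsForcingSet at hforce
  rw [chrom_eq k hk] at hforce
  obtain ⟨p, c, ⟨hc, hagree⟩, huniq⟩ := hforce
  have hc' := (proper_transfer c).mp hc
  set c' := fun v => c (ek k v) with hc'def
  have d1 : c' (Sum.inl false) ≠ c' (Sum.inr (⟨0,hk⟩, 0)) := hc' (adj_ub hk)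
  have d2 : c' (Sum.inl false) ≠ c' (Sum.inr (⟨0,hk⟩, 1)) := hc' (adj_uc hk)
  have d3 : c' (Sum.inr (⟨0,hk⟩, (0:Fin 4))) ≠ c' (Sum.inr (⟨0,hk⟩, 1)) := hc' (adj_bc hk)
  have hsurj : ∀ t : Fin 3, ∃ w, c w = t := by
    have hinj : Function.Injective
        (![c' (Sum.inl false), c' (Sum.inr (⟨0,hk⟩, 0)), c' (Sum.inr (⟨0,hk⟩, 1))] : Fin 3 → Fin 3) := by
      intro a b hab
      fin_cases a <;> fin_cases b <;> simp_all
    intro t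
    obtain ⟨j, hj⟩ := (Finite.injective_iff_surjective.mp hinj) t
    fin_cases j
    · exact ⟨ek k (Sum.inl false), hj⟩
    · exact ⟨ek k (Sum.inr (⟨0,hk⟩, 0)), hj⟩
    · exact ⟨ek k (Sum.inr (⟨0,hk⟩, 1)), hj⟩
  interval_cases n
  · -- card 0
    rw [Finset.card_eq_zero] at hcard
    subst hcard
    have hprop : properCol (G' k) 3 (fun v => Equiv.swap (0:Fin 3) 1 (c v)) :=
      fun u v h hh => hc h ((Equiv.swap (0:Fin 3) 1).injective hh)
    have := huniq _ ⟨hprop, fun v hv => absurd hv (Finset.notMem_empty v)⟩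
    obtain ⟨w, hw⟩ := hsurj 0
    have h2 := congrFun this w
    rw [hw] at h2
    simp at h2
  · -- card 1
    obtain ⟨d, rfl⟩ := Finset.card_eq_one.mp hcard
    set v0 := c d with hv0
    have hprop : properCol (G' k) 3 (fun v => Equiv.swap (v0+1) (v0+2) (c v)) :=
      fun u v h hh => hc h ((Equiv.swap (v0+1) (v0+2)).injective hh)
    have hag : ∀ v ∈ ({d} : Finset _), Equiv.swap (v0+1) (v0+2) (c v) = p v := by
      intro v hv
      rw [Finset.mem_singleton] at hv
      rw [hv, ← hv0, swapF1, hv0]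
      exact hagree d (Finset.mem_singleton_self d)
    have := huniq _ ⟨hprop, hag⟩
    obtain ⟨w, hw⟩ := hsurj (v0+1)
    have h2 := congrFun this w
    rw [hw, swapF2] at h2
    exact swapF3 v0 h2

lemma npart_eq (m : ℕ) : Npart (G' (m+1)) 3 = 2 ^ m + 1 := by
  rw [← count m]
  unfold Npart
  refine Nat.card_congr ⟨fun rr => ⟨fun x y => rr.1 (ek _ x) (ek _ y), ?_⟩,
    fun rr => ⟨fun a b => rr.1 ((ek _).symm a) ((ek _).symm b), ?_⟩, ?_, ?_⟩
  · obtain ⟨r, c, hc, rfl⟩ := rr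
    exact ⟨fun v => c (ek _ v), (proper_transfer c).mp hc, rfl⟩
  · obtain ⟨r, c, hc, rfl⟩ := rr
    refine ⟨fun a => c ((ek _).symm a), ?_, rfl⟩
    rw [proper_transfer]
    have : (fun v => c ((ek _).symm (ek _ v))) = c := by
      funext v; rw [Equiv.symm_apply_apply]
    rw [this]
    exact hc
  · rintro ⟨r, hr⟩
    apply Subtype.ext
    funext a b
    show r (ek _ ((ek _).symm a)) (ek _ ((ek _).symm b)) = r a b
    rw [Equiv.apply_symm_apply, Equiv.apply_symm_apply]
  · rintro ⟨r, hr⟩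
    apply Subtype.ext
    funext x y
    show r ((ek _).symm (ek _ x)) ((ek _).symm (ek _ y)) = r x y
    rw [Equiv.symm_apply_apply, Equiv.symm_apply_apply]

end S12


theorem stmt12 (k : ℕ) (hk : 1 ≤ k) :
    ∃ G : SimpleGraph (Fin (4 * k + 2)),
      chrom G = 3 ∧ Fchi G = 2 ∧ Npart G 3 = 2 ^ (k - 1) + 1 := by
  obtain ⟨m, rfl⟩ : ∃ m, k = m + 1 := ⟨k - 1, by omega⟩
  exact ⟨S12.G' (m+1), S12.chrom_eq (m+1) (Nat.succ_pos m),
    S12.fchi_eq (m+1) (Nat.succ_pos m), by simpa using S12.npart_eq m⟩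
end

section
/- If χ(G) ≥ 3, then G is uniquely 3-colorable if and only if F_χ(G × K₃) = 2, where G × K₃ is the Cartesian product of G with a triangle. -/
set_option linter.unusedSectionVars false
set_option maxHeartbeats 1000000

open SimpleGraph
open Fin.CommRing

section Basic
variable {V : Type*} [Fintype V] {G : SimpleGraph V}

lemma chrom_le_iff {s : ℕ} : chrom G ≤ s ↔ ∃ c : V → Fin s, properCol G s c := by
  constructor
  · intro h
    have hne : {t | ∃ c : V → Fin t, properCol G t c}.Nonempty := by
      refine ⟨Fintype.card V, fun v => Fintype.equivFin V v, ?_⟩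
      intro u v huv he
      exact G.ne_of_adj huv ((Fintype.equivFin V).injective he)
    obtain ⟨c, hc⟩ := Nat.sInf_mem hne
    exact ⟨fun v => Fin.castLE h (c v), fun u v huv he => hc huv (Fin.castLE_injective h he)⟩
  · intro ⟨c, hc⟩
    exact Nat.sInf_le ⟨c, hc⟩

lemma exists_proper_chrom : ∃ c : V → Fin (chrom G), properCol G (chrom G) c :=
  chrom_le_iff.mp le_rfl

lemma col_surj {s : ℕ} (hs : chrom G = s) {c : V → Fin s} (hc : properCol G s c) :
    Function.Surjective c := by
  rw [Function.Surjective] at *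
  by_contra h
  push_neg at h
  obtain ⟨y, hy⟩ := h
  match s, hs, y, c, hc, hy with
  | (n+1), hs, y, c, hc, hy =>
    set e := finSuccEquiv' y with he
    have hsome : ∀ v, (e (c v)).isSome := by
      intro v
      rw [Option.isSome_iff_ne_none]
      intro h
      have : c v = y := by
        apply e.injective
        rw [h, he, finSuccEquiv'_at]
      exact hy v this
    have : chrom G ≤ n := by
      refine chrom_le_iff.mpr ⟨fun v => (e (c v)).get (hsome v), ?_⟩
      intro u v huv heq
      apply hc huv
      apply e.injective
      simp only at heq
      rw [← Option.some_get (hsome u), ← Option.some_get (hsome v), heq]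
    omega

end Basic

section Box
variable {V : Type*} [Fintype V] {G : SimpleGraph V}

abbrev HB (G : SimpleGraph V) : SimpleGraph (V × Fin 3) := G.boxProd (⊤ : SimpleGraph (Fin 3))

lemma layer_proper {C : V × Fin 3 → Fin 3} (hC : properCol (HB G) 3 C) (m : Fin 3) :
    properCol G 3 (fun u => C (u, m)) := by
  intro u v huv
  exact hC (by simp [boxProd_adj, huv])

lemma col_distinct {C : V × Fin 3 → Fin 3} (hC : properCol (HB G) 3 C) (u : V)
    {m m' : Fin 3} (h : m ≠ m') : C (u, m) ≠ C (u, m') :=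
  hC (by simp [boxProd_adj, h])

lemma cyc_proper {c : V → Fin 3} (hc : properCol G 3 c) {τ : Fin 3 → Fin 3}
    (hτ : Function.Injective τ) {ε : Fin 3} (hε : ε = 1 ∨ ε = 2) :
    properCol (HB G) 3 (fun x => τ (c x.1) + ε * x.2) := by
  have key : ∀ ε m m' : Fin 3, (ε = 1 ∨ ε = 2) → m ≠ m' → ε * m ≠ ε * m' := by decide
  rintro ⟨u, m⟩ ⟨v, m'⟩ hadj heq
  simp only [boxProd_adj, top_adj] at hadj
  simp only at heq
  rcases hadj with ⟨h1, h2⟩ | ⟨h1, h2⟩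
  · subst h2
    exact hc h1 (hτ (by linear_combination heq))
  · subst h2
    exact key ε m m' hε h1 (by linear_combination heq)

lemma kernel_eq (hN : Npart G 3 = 1) {a b : V → Fin 3} (ha : properCol G 3 a)
    (hb : properCol G 3 b) (u v : V) : a u = a v ↔ b u = b v := by
  rw [Npart, Nat.card_eq_one_iff_unique] at hN
  have h := @Subsingleton.elim _ hN.1 ⟨_, a, ha, rfl⟩ ⟨_, b, hb, rfl⟩
  have h2 := congrFun (congrFun (Subtype.mk_eq_mk.mp h) u) v
  exact iff_of_eq h2

def perm2 (s₁ s₂ t₁ t₂ : Fin 3) : Fin 3 → Fin 3 :=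
  fun z => if z = s₁ then t₁ else if z = s₂ then t₂ else -(t₁ + t₂)

lemma perm2_spec : ∀ s₁ s₂ t₁ t₂ : Fin 3, s₁ ≠ s₂ → t₁ ≠ t₂ →
    Function.Injective (perm2 s₁ s₂ t₁ t₂) ∧ perm2 s₁ s₂ t₁ t₂ s₁ = t₁ ∧
      perm2 s₁ s₂ t₁ t₂ s₂ = t₂ := by decide

lemma perm2_other {s₁ s₂ t₁ t₂ z : Fin 3} (h1 : z ≠ s₁) (h2 : z ≠ s₂) :
    perm2 s₁ s₂ t₁ t₂ z = -(t₁ + t₂) := by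
  simp [perm2, h1, h2]

end Box
section Main
variable {V : Type*} [Fintype V] {G : SimpleGraph V}

lemma nonempty_of_chrom (h3 : 3 ≤ chrom G) : Nonempty V := by
  by_contra h
  rw [not_nonempty_iff] at h
  have : chrom G ≤ 0 :=
    (chrom_le_iff (G := G) (s := 0)).mpr ⟨fun v => (h.elim v : Fin 0), fun u v huv => (h.elim u : False).elim⟩
  omega

lemma chrom_box (h3 : 3 ≤ chrom G) : chrom (HB G) = chrom G := by
  refine le_antisymm ?_ ?_
  · obtain ⟨c, hc⟩ := exists_proper_chrom (G := G)
    apply chrom_le_iff.mpr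
    haveI : NeZero (chrom G) := ⟨by omega⟩
    refine ⟨fun x => c x.1 + Fin.castLE h3 x.2, ?_⟩
    rintro ⟨u, m⟩ ⟨v, m'⟩ hadj heq
    simp only [boxProd_adj, top_adj] at hadj
    simp only at heq
    rcases hadj with ⟨h1, h2⟩ | ⟨h1, h2⟩
    · subst h2
      exact hc h1 (by linear_combination heq)
    · subst h2
      exact h1 (Fin.castLE_injective h3 (by linear_combination heq))
  · obtain ⟨C, hC⟩ := exists_proper_chrom (G := HB G)
    exact chrom_le_iff.mpr ⟨fun u => C (u, 0), fun u v huv => hC (by simp [boxProd_adj, huv])⟩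

lemma no_small_forcing {W : Type*} [Fintype W] {H : SimpleGraph W} {D : Finset W}
    (hcard : D.card + 2 ≤ chrom H) (hD : IsForcingSet H D) : False := by
  classical
  obtain ⟨p, C, ⟨hC, hCp⟩, huniq⟩ := hD
  have hcs : (D.image C).card ≤ D.card := Finset.card_image_le
  have hcompl : 1 < (D.image C)ᶜ.card := by
    rw [Finset.card_compl, Fintype.card_fin]
    omega
  obtain ⟨q, hq, r, hr, hqr⟩ := Finset.one_lt_card.mp hcompl
  have hq' : ∀ d ∈ D, C d ≠ q := fun d hd he =>
    (Finset.mem_compl.mp hq) (he ▸ Finset.mem_image_of_mem C hd)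
  have hr' : ∀ d ∈ D, C d ≠ r := fun d hd he =>
    (Finset.mem_compl.mp hr) (he ▸ Finset.mem_image_of_mem C hd)
  set C' := fun w => Equiv.swap q r (C w) with hC'def
  have hC' : properCol H (chrom H) C' := fun u v huv he => hC huv ((Equiv.swap q r).injective he)
  have hC'p : ∀ v ∈ D, C' v = p v := by
    intro d hd
    have h0 : C' d = C d := Equiv.swap_apply_of_ne_of_ne (hq' d hd) (hr' d hd)
    rw [h0]; exact hCp d hd
  have heqC : C' = C := (huniq C' ⟨hC', hC'p⟩).trans (huniq C ⟨hC, hCp⟩).symm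
  obtain ⟨w, hw⟩ := col_surj rfl hC q
  have hfin : C' w = r := by rw [hC'def]; simp only [hw]; exact Equiv.swap_apply_left q r
  rw [heqC, hw] at hfin
  exact hqr hfin

lemma classify (hG3 : chrom G = 3) (hN : Npart G 3 = 1) {c₀ : V → Fin 3}
    (hc₀ : properCol G 3 c₀) {C : V × Fin 3 → Fin 3} (hC : properCol (HB G) 3 C) :
    ∃ ε : Fin 3, (ε = 1 ∨ ε = 2) ∧ (∀ u m, C (u, m) = C (u, 0) + ε * m) ∧
      (∀ u v, C (u, 0) = C (v, 0) ↔ c₀ u = c₀ v) := by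
  have hsurj := col_surj hG3 hc₀
  have hL : ∀ m : Fin 3, properCol G 3 (fun u => C (u, m)) := layer_proper hC
  have hker : ∀ (m : Fin 3) (u v : V), C (u, m) = C (v, m) ↔ c₀ u = c₀ v :=
    fun m u v => kernel_eq hN (hL m) hc₀ u v
  have hd1 : ∀ u : V, C (u, 1) - C (u, 0) = 1 ∨ C (u, 1) - C (u, 0) = 2 := by
    intro u
    have h := col_distinct hC u (show (1 : Fin 3) ≠ 0 by decide)
    revert h
    generalize C (u, 1) = A
    generalize C (u, 0) = B
    revert A B
    decide
  have hconst : ∀ u v : V, C (u, 1) - C (u, 0) = C (v, 1) - C (v, 0) := by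
    intro u v
    by_cases hc : c₀ u = c₀ v
    · rw [(hker 1 u v).mpr hc, (hker 0 u v).mpr hc]
    · obtain ⟨w, hw⟩ := hsurj (-(c₀ u + c₀ v))
      have hwu : c₀ w ≠ c₀ u := by
        rw [hw]; revert hc; generalize c₀ u = A; generalize c₀ v = B; revert A B; decide
      have hwv : c₀ w ≠ c₀ v := by
        rw [hw]; revert hc; generalize c₀ u = A; generalize c₀ v = B; revert A B; decide
      have key : ∀ a1 a0 b1 b0 w1 w0 : Fin 3,
          a1 ≠ b1 → a1 ≠ w1 → b1 ≠ w1 → a0 ≠ b0 → a0 ≠ w0 → b0 ≠ w0 →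
          (a1 - a0 = 1 ∨ a1 - a0 = 2) → (b1 - b0 = 1 ∨ b1 - b0 = 2) →
          (w1 - w0 = 1 ∨ w1 - w0 = 2) → a1 - a0 = b1 - b0 := by decide
      exact key _ _ _ _ _ _
        (fun h => hc ((hker 1 u v).mp h))
        (fun h => hwu ((hker 1 u w).mp h).symm)
        (fun h => hwv ((hker 1 v w).mp h).symm)
        (fun h => hc ((hker 0 u v).mp h))
        (fun h => hwu ((hker 0 u w).mp h).symm)
        (fun h => hwv ((hker 0 v w).mp h).symm)
        (hd1 u) (hd1 v) (hd1 w)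
  obtain ⟨u₀⟩ := nonempty_of_chrom (G := G) (by omega)
  refine ⟨C (u₀, 1) - C (u₀, 0), hd1 u₀, ?_, fun u v => hker 0 u v⟩
  intro u m
  have h1 : C (u, 1) = C (u, 0) + (C (u₀, 1) - C (u₀, 0)) := by
    have := hconst u u₀
    linear_combination this
  have h2 : C (u, 2) = C (u, 0) + (C (u₀, 1) - C (u₀, 0)) * 2 := by
    have hd20 := col_distinct hC u (show (2 : Fin 3) ≠ 0 by decide)
    have hd21 := col_distinct hC u (show (2 : Fin 3) ≠ 1 by decide)
    rw [h1] at hd21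
    have he := hd1 u₀
    revert hd20 hd21 he
    generalize C (u₀, 1) - C (u₀, 0) = E
    generalize C (u, 2) = A
    generalize C (u, 0) = B
    revert E A B
    decide
  have hm : m = 0 ∨ m = 1 ∨ m = 2 := by revert m; decide
  rcases hm with rfl | rfl | rfl
  · linear_combination
  · linear_combination h1
  · linear_combination h2

end Main
section Heart
variable {V : Type*} [Fintype V] {G : SimpleGraph V}

lemma exists_matching (e : V → Fin 3) (x y : V) {i j p₁ p₂ : Fin 3}
    (hij : i ≠ j) (hp : p₁ ≠ p₂) :
    ∃ τ : Fin 3 → Fin 3, Function.Injective τ ∧ ∃ ε : Fin 3, (ε = 1 ∨ ε = 2) ∧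
      τ (e x) + ε * i = p₁ ∧ τ (e y) + ε * j = p₂ := by
  by_cases hxy : e x = e y
  · have hsolv : ∀ i j p₁ p₂ : Fin 3, i ≠ j → p₁ ≠ p₂ →
        ∃ ε : Fin 3, (ε = 1 ∨ ε = 2) ∧ p₁ - ε * i = p₂ - ε * j := by decide
    obtain ⟨ε, hε, hval⟩ := hsolv i j p₁ p₂ hij hp
    refine ⟨fun z => z + (p₁ - ε * i - e x), fun z z' h => by linear_combination h, ε, hε,
      show e x + (p₁ - ε * i - e x) + ε * i = p₁ by ring, ?_⟩
    show e y + (p₁ - ε * i - e x) + ε * j = p₂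
    linear_combination hval - hxy
  · have hsolv : ∀ i j p₁ p₂ : Fin 3, i ≠ j →
        ∃ ε : Fin 3, (ε = 1 ∨ ε = 2) ∧ p₁ - ε * i ≠ p₂ - ε * j := by decide
    obtain ⟨ε, hε, hval⟩ := hsolv i j p₁ p₂ hij
    obtain ⟨hinj, hv1, hv2⟩ := perm2_spec (e x) (e y) (p₁ - ε * i) (p₂ - ε * j) hxy hval
    exact ⟨_, hinj, ε, hε, by rw [hv1]; ring, by rw [hv2]; ring⟩

lemma no_forcing_two (hG3 : chrom G = 3) {a b : V → Fin 3} (ha : properCol G 3 a)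
    (hb : properCol G 3 b) {u v : V} (hau : a u = a v) (hbu : b u ≠ b v)
    {D : Finset (V × Fin 3)} (hD : D.card = 2) {p : V × Fin 3 → Fin 3}
    (hu : ∃! C : V × Fin 3 → Fin 3, properCol (HB G) 3 C ∧ ∀ d ∈ D, C d = p d) : False := by
  classical
  obtain ⟨d₁, d₂, hne, rfl⟩ := Finset.card_eq_two.mp hD
  obtain ⟨x, i⟩ := d₁
  obtain ⟨y, j⟩ := d₂
  obtain ⟨C, ⟨hC, hmatch⟩, huniq⟩ := hu
  have hm1 : C (x, i) = p (x, i) := hmatch _ (Finset.mem_insert_self _ _)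
  have hm2 : C (y, j) = p (y, j) := hmatch _ (by simp)
  by_cases hij : i = j
  · subst hij
    have mk : ∀ ε : Fin 3, (ε = 1 ∨ ε = 2) → ∃ C' : V × Fin 3 → Fin 3,
        (properCol (HB G) 3 C' ∧ ∀ d ∈ ({(x, i), (y, i)} : Finset (V × Fin 3)), C' d = p d) ∧
        C' (x, i + 1) = C (x, i) + ε := by
      intro ε hε
      refine ⟨fun w => (C (w.1, i) - ε * i) + ε * w.2, ⟨?_, ?_⟩,
        show (C (x, i) - ε * i) + ε * (i + 1) = C (x, i) + ε by ring⟩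
      · exact cyc_proper (layer_proper hC i)
          (τ := fun z => z - ε * i) (fun z z' h => by linear_combination h) hε
      · intro d hd
        rcases Finset.mem_insert.mp hd with rfl | hd
        · show (C (x, i) - ε * i) + ε * i = p (x, i)
          linear_combination hm1
        · rw [Finset.mem_singleton.mp hd]
          show (C (y, i) - ε * i) + ε * i = p (y, i)
          linear_combination hm2
    obtain ⟨C1, h1, e1⟩ := mk 1 (Or.inl rfl)
    obtain ⟨C2, h2, e2⟩ := mk 2 (Or.inr rfl)
    have h12 : C1 = C2 := (huniq C1 h1).trans (huniq C2 h2).symm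
    rw [h12, e2] at e1
    have : (1 : Fin 3) = 2 := by linear_combination - e1
    exact absurd this (by decide)
  · by_cases hpp : p (x, i) = p (y, j)
    · have hexy : C (x, j) ≠ C (y, j) := by
        intro h
        apply col_distinct hC x hij
        rw [hm1, hpp, ← hm2]
        exact h.symm
      have mk : ∀ ε : Fin 3, (ε = 1 ∨ ε = 2) → ∃ C' : V × Fin 3 → Fin 3,
          (properCol (HB G) 3 C' ∧ ∀ d ∈ ({(x, i), (y, j)} : Finset (V × Fin 3)), C' d = p d) ∧
          C' (y, j + 1) = p (y, j) + ε := by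
        intro ε hε
        have hval : p (x, i) - ε * i ≠ p (y, j) - ε * j := by
          rw [hpp]
          revert hij hε
          generalize p (y, j) = P
          generalize (i : Fin 3) = I
          generalize (j : Fin 3) = J
          revert P
          intro P h1 h2
          revert h1 h2
          have : ∀ P E I J : Fin 3, I ≠ J → (E = 1 ∨ E = 2) → P - E * I ≠ P - E * J := by decide
          exact this P ε I J
        obtain ⟨hinj, hv1, hv2⟩ :=
          perm2_spec (C (x, j)) (C (y, j)) (p (x, i) - ε * i) (p (y, j) - ε * j) hexy hval
        refine ⟨fun w => perm2 (C (x, j)) (C (y, j)) (p (x, i) - ε * i) (p (y, j) - ε * j)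
            (C (w.1, j)) + ε * w.2, ⟨?_, ?_⟩, ?_⟩
        · exact cyc_proper (layer_proper hC j) hinj hε
        · intro d hd
          rcases Finset.mem_insert.mp hd with rfl | hd
          · show perm2 _ _ _ _ (C (x, j)) + ε * i = p (x, i)
            rw [hv1]; ring
          · rw [Finset.mem_singleton.mp hd]
            show perm2 _ _ _ _ (C (y, j)) + ε * j = p (y, j)
            rw [hv2]; ring
        · show perm2 _ _ _ _ (C (y, j)) + ε * (j + 1) = p (y, j) + ε
          rw [hv2]; ring
      obtain ⟨C1, h1, e1⟩ := mk 1 (Or.inl rfl)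
      obtain ⟨C2, h2, e2⟩ := mk 2 (Or.inr rfl)
      have h12 : C1 = C2 := (huniq C1 h1).trans (huniq C2 h2).symm
      rw [h12, e2] at e1
      have : (1 : Fin 3) = 2 := by linear_combination - e1
      exact absurd this (by decide)
    · obtain ⟨τa, hτa, εa, hεa, ha1, ha2⟩ := exists_matching a x y hij hpp
      obtain ⟨τb, hτb, εb, hεb, hb1, hb2⟩ := exists_matching b x y hij hpp
      have hMa : properCol (HB G) 3 (fun w : V × Fin 3 => τa (a w.1) + εa * w.2) :=
        cyc_proper ha hτa hεa
      have hMb : properCol (HB G) 3 (fun w : V × Fin 3 => τb (b w.1) + εb * w.2) :=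
        cyc_proper hb hτb hεb
      have hma : ∀ d ∈ ({(x, i), (y, j)} : Finset (V × Fin 3)),
          (fun w : V × Fin 3 => τa (a w.1) + εa * w.2) d = p d := by
        intro d hd
        rcases Finset.mem_insert.mp hd with rfl | hd
        · exact ha1
        · rw [Finset.mem_singleton.mp hd]; exact ha2
      have hmb : ∀ d ∈ ({(x, i), (y, j)} : Finset (V × Fin 3)),
          (fun w : V × Fin 3 => τb (b w.1) + εb * w.2) d = p d := by
        intro d hd
        rcases Finset.mem_insert.mp hd with rfl | hd
        · exact hb1
        · rw [Finset.mem_singleton.mp hd]; exact hb2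
      have hab : (fun w : V × Fin 3 => τa (a w.1) + εa * w.2)
          = (fun w : V × Fin 3 => τb (b w.1) + εb * w.2) :=
        (huniq _ ⟨hMa, hma⟩).trans (huniq _ ⟨hMb, hmb⟩).symm
      have e1 : τa (a u) + εa * 0 = τb (b u) + εb * 0 := congrFun hab (u, 0)
      have e2 : τa (a v) + εa * 0 = τb (b v) + εb * 0 := congrFun hab (v, 0)
      have hA : τa (a u) = τa (a v) := congrArg τa hau
      have : τb (b u) = τb (b v) := by linear_combination hA - e1 + e2
      exact hbu (hτb this)

end Heart
section Final
variable {V : Type*} [Fintype V] {G : SimpleGraph V}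

lemma Npart_eq_one (hG3 : chrom G = 3)
    (hf : ∃ D : Finset (V × Fin 3), D.card = 2 ∧ ∃ p : V × Fin 3 → Fin 3,
      ∃! C : V × Fin 3 → Fin 3, properCol (HB G) 3 C ∧ ∀ d ∈ D, C d = p d) :
    Npart G 3 = 1 := by
  obtain ⟨D, hD, pp, hu⟩ := hf
  rw [Npart, Nat.card_eq_one_iff_unique]
  constructor
  · constructor
    rintro ⟨r, a, ha, rfl⟩ ⟨r', b, hb, rfl⟩
    have key : ∀ u v, (a u = a v) ↔ (b u = b v) := by
      intro u v
      constructor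
      · intro h; by_contra h'
        exact no_forcing_two hG3 ha hb h h' hD hu
      · intro h; by_contra h'
        exact no_forcing_two hG3 hb ha h h' hD hu
    apply Subtype.ext
    funext u v
    exact propext (key u v)
  · obtain ⟨c, hc⟩ := chrom_le_iff.mp (le_of_eq hG3)
    exact ⟨⟨_, c, hc, rfl⟩⟩

end Final

theorem stmt13 {V : Type*} [Fintype V] (G : SimpleGraph V)
    (hchi : 3 ≤ chrom G) :
    (chrom G = 3 ∧ Npart G 3 = 1) ↔
      Fchi (G.boxProd (⊤ : SimpleGraph (Fin 3))) = 2 := by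
  classical
  have hHG : chrom (HB G) = chrom G := chrom_box hchi
  constructor
  · rintro ⟨hG3, hN⟩
    have hH3 : chrom (HB G) = 3 := hHG.trans hG3
    obtain ⟨c₀, hc₀⟩ := chrom_le_iff.mp (le_of_eq hG3)
    have hsurj := col_surj hG3 hc₀
    obtain ⟨x, hx⟩ := hsurj 0
    obtain ⟨y, hy⟩ := hsurj 1
    have hdne : ((x, (0 : Fin 3)) : V × Fin 3) ≠ (y, 1) :=
      fun h => absurd (congrArg Prod.snd h) (show ¬(0 : Fin 3) = 1 by decide)
    have hDcard : ({(x, 0), (y, 1)} : Finset (V × Fin 3)).card = 2 := by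
      rw [Finset.card_insert_of_notMem (by simp [hdne]), Finset.card_singleton]
    have h2mem : 2 ∈ {k | ∃ D : Finset (V × Fin 3), D.card = k ∧ IsForcingSet (HB G) D} := by
      refine ⟨{(x, 0), (y, 1)}, hDcard, ?_⟩
      unfold IsForcingSet
      rw [hH3]
      obtain ⟨hinj, hv1, hv2⟩ := perm2_spec (c₀ x) (c₀ y) 0 2
        (by rw [hx, hy]; decide) (by decide)
      refine ⟨fun d => if d = ((x, 0) : V × Fin 3) then 0 else 1,
        fun w => perm2 (c₀ x) (c₀ y) 0 2 (c₀ w.1) + 2 * w.2, ⟨?_, ?_⟩, ?_⟩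
      · exact cyc_proper hc₀ hinj (Or.inr rfl)
      · intro d hd
        rcases Finset.mem_insert.mp hd with rfl | hd
        · show perm2 (c₀ x) (c₀ y) 0 2 (c₀ x) + 2 * 0
            = if ((x, 0) : V × Fin 3) = (x, 0) then 0 else 1
          rw [if_pos rfl, hv1]
          decide
        · rw [Finset.mem_singleton.mp hd]
          show perm2 (c₀ x) (c₀ y) 0 2 (c₀ y) + 2 * 1
            = if ((y, 1) : V × Fin 3) = (x, 0) then 0 else 1
          rw [if_neg (Ne.symm hdne), hv2]
          decide
      · rintro C' ⟨hC', hmatch'⟩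
        obtain ⟨ε, hε, hcyc, hker⟩ := classify hG3 hN hc₀ hC'
        have hC'x : C' (x, 0) = 0 := by
          have h : C' (x, 0) = if ((x, 0) : V × Fin 3) = (x, 0) then 0 else 1 :=
            hmatch' (x, 0) (Finset.mem_insert_self _ _)
          rwa [if_pos rfl] at h
        have hC'y : C' (y, 1) = 1 := by
          have h : C' (y, 1) = if ((y, 1) : V × Fin 3) = (x, 0) then 0 else 1 :=
            hmatch' (y, 1) (by simp)
          rwa [if_neg (Ne.symm hdne)] at h
        have h0 : (1 : Fin 3) = C' (y, 0) + ε * 1 := by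
          have h := hcyc y 1
          rwa [hC'y] at h
        have hne0 : C' (y, 0) ≠ 0 := by
          intro h
          have : c₀ y = c₀ x := (hker y x).mp (by rw [h, hC'x])
          rw [hx, hy] at this
          exact absurd this (by decide)
        have harith : ∀ z E : Fin 3, (E = 1 ∨ E = 2) → (1 : Fin 3) = z + E * 1 → z ≠ 0 →
            E = 2 ∧ z = 2 := by decide
        obtain ⟨hε2, hy2⟩ := harith _ _ hε h0 hne0
        funext w
        obtain ⟨w, m⟩ := w
        rw [hcyc w m, hε2]
        have hsw : C' (w, 0) = perm2 (c₀ x) (c₀ y) 0 2 (c₀ w) := by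
          by_cases h1 : c₀ w = c₀ x
          · rw [(hker w x).mpr h1, hC'x, h1, hv1]
          · by_cases h2 : c₀ w = c₀ y
            · rw [(hker w y).mpr h2, hy2, h2, hv2]
            · rw [perm2_other h1 h2]
              have hz1 : C' (w, 0) ≠ 0 := fun h => h1 ((hker w x).mp (by rw [h, hC'x]))
              have hz2 : C' (w, 0) ≠ 2 := fun h => h2 ((hker w y).mp (by rw [h, hy2]))
              revert hz1 hz2
              generalize C' (w, 0) = z
              revert z
              decide
        rw [hsw]
    have hlb : ∀ k ∈ {k | ∃ D : Finset (V × Fin 3), D.card = k ∧ IsForcingSet (HB G) D},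
        2 ≤ k := by
      rintro k ⟨D', hD', hf'⟩
      by_contra h
      exact no_small_forcing (show D'.card + 2 ≤ chrom (HB G) by omega) hf'
    show sInf {k | ∃ D : Finset (V × Fin 3), D.card = k ∧ IsForcingSet (HB G) D} = 2
    exact le_antisymm (Nat.sInf_le h2mem) (le_csInf ⟨2, h2mem⟩ hlb)
  · intro hF
    have hS : ({k | ∃ D : Finset (V × Fin 3), D.card = k ∧ IsForcingSet (HB G) D}).Nonempty := by
      by_contra h
      rw [Set.not_nonempty_iff_eq_empty] at h
      have h0 : Fchi (HB G) = 0 := by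
        show sInf {k | ∃ D : Finset (V × Fin 3), D.card = k ∧ IsForcingSet (HB G) D} = 0
        rw [h]
        exact Nat.sInf_empty
      rw [hF] at h0
      exact absurd h0 (by decide)
    have key : Fchi (HB G) ∈
        {k | ∃ D : Finset (V × Fin 3), D.card = k ∧ IsForcingSet (HB G) D} :=
      Nat.sInf_mem hS
    rw [hF] at key
    obtain ⟨D, hD, hf⟩ := key
    have hH3 : chrom (HB G) = 3 := by
      have hge : 3 ≤ chrom (HB G) := hHG ▸ hchi
      by_contra h
      exact no_small_forcing (show D.card + 2 ≤ chrom (HB G) by omega) hf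
    have hG3 : chrom G = 3 := hHG.symm.trans hH3
    refine ⟨hG3, Npart_eq_one hG3 ⟨D, hD, ?_⟩⟩
    unfold IsForcingSet at hf
    rw [hH3] at hf
    exact hf
end

section
/- If G is a connected graph containing a triangle, then F_χ((G · K₃) × K₃) ≤ 3. -/
open SimpleGraph

/-! ### Auxiliary material for `stmt16` -/

/-- If a function on `Fin 3` is injective and everywhere disagrees with the
translation `j ↦ j + d`, then it is itself a translation. -/
lemma fin3_row : ∀ (d : Fin 3) (g : Fin 3 → Fin 3),
    (∀ j j' : Fin 3, j ≠ j' → g j ≠ g j') →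
    (∀ j, g j ≠ j + d) → ∃ e : Fin 3, ∀ j, g j = j + e := by decide

lemma fin3_force : ∀ (x k j : Fin 3), (∀ i, i ≠ k → x ≠ i + j) → x = k + j := by
  decide

lemma fin3_third : ∀ z : Fin 3, z ≠ 0 → z ≠ 1 → z = 2 := by decide

set_option synthInstance.maxSize 400 in
set_option maxRecDepth 4000 in
lemma fin3_tri : ∀ a0 a1 a2 b0 b1 b2 c0 c1 c2 : Fin 3,
    a0 = 0 → a1 = 1 →
    a0 ≠ b1 → a0 ≠ b2 → a1 ≠ b0 → a1 ≠ b2 → a2 ≠ b0 → a2 ≠ b1 →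
    a0 ≠ c1 → a0 ≠ c2 → a1 ≠ c0 → a1 ≠ c2 → a2 ≠ c0 → a2 ≠ c1 →
    b0 ≠ c1 → b0 ≠ c2 → b1 ≠ c0 → b1 ≠ c2 → b2 ≠ c0 → b2 ≠ c1 →
    a2 = 2 := by decide

/-- The graph `(G · K₃) × K₃` (categorical product with K₃, then Cartesian with K₃). -/
def XX {V : Type*} (G : SimpleGraph V) : SimpleGraph ((V × Fin 3) × Fin 3) :=
  (tensorProd G (⊤ : SimpleGraph (Fin 3))).boxProd (⊤ : SimpleGraph (Fin 3))

/-- The canonical proper 3-coloring of `XX G`. -/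
def cc {V : Type*} : (V × Fin 3) × Fin 3 → Fin 3 := fun x => x.1.2 + x.2

lemma adjXX1 {V : Type*} {G : SimpleGraph V} {v w : V} {i k : Fin 3} (j : Fin 3)
    (hvw : G.Adj v w) (hik : i ≠ k) : (XX G).Adj ((v, i), j) ((w, k), j) :=
  SimpleGraph.boxProd_adj.mpr (Or.inl ⟨⟨hvw, (SimpleGraph.top_adj _ _).mpr hik⟩, rfl⟩)

lemma adjXX2 {V : Type*} {G : SimpleGraph V} (x : V × Fin 3) {j j' : Fin 3}
    (h : j ≠ j') : (XX G).Adj (x, j) (x, j') :=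
  SimpleGraph.boxProd_adj.mpr (Or.inr ⟨(SimpleGraph.top_adj _ _).mpr h, rfl⟩)

lemma cc_proper {V : Type*} (G : SimpleGraph V) : properCol (XX G) 3 cc := by
  intro u v h hne
  rcases SimpleGraph.boxProd_adj.mp h with ⟨⟨_, hi⟩, hj⟩ | ⟨hj, h1⟩
  · have hi' : u.1.2 ≠ v.1.2 := (SimpleGraph.top_adj _ _).mp hi
    apply hi'
    have h2 : u.1.2 + u.2 = v.1.2 + v.2 := hne
    rw [hj] at h2
    exact add_right_cancel h2
  · have hj' : u.2 ≠ v.2 := (SimpleGraph.top_adj _ _).mp hj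
    apply hj'
    have h2 : u.1.2 + u.2 = v.1.2 + v.2 := hne
    rw [h1] at h2
    exact add_left_cancel h2

/-- Key uniqueness lemma: a proper 3-coloring of `XX G` that agrees with `cc` on the
three chosen vertices equals `cc`. -/
lemma cc_unique {V : Type*} (G : SimpleGraph V) (hconn : G.Connected)
    {a b t : V} (hab : G.Adj a b) (hbt : G.Adj b t) (hat : G.Adj a t)
    (c : (V × Fin 3) × Fin 3 → Fin 3) (hc : properCol (XX G) 3 c)
    (h1 : c ((a, 0), 0) = 0) (h2 : c ((a, 1), 0) = 1) (h3 : c ((a, 0), 1) = 1) :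
    c = cc := by
  have rowinj : ∀ (x : V × Fin 3) (j j' : Fin 3), j ≠ j' → c (x, j) ≠ c (x, j') :=
    fun x j j' h => hc (adjXX2 x h)
  have cross : ∀ (v w : V) (i k j : Fin 3), G.Adj v w → i ≠ k →
      c ((v, i), j) ≠ c ((w, k), j) :=
    fun v w i k j hvw hik => hc (adjXX1 j hvw hik)
  -- the base row is the identity translation
  have ra0 : ∀ j, c ((a, 0), j) = j + 0 := by
    intro j
    fin_cases j
    · simpa using h1
    · simpa using h3
    · have := fin3_third (c ((a, 0), 2))
        (fun h => rowinj (a, 0) 2 0 (by decide) (h.trans h1.symm))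
        (fun h => rowinj (a, 0) 2 1 (by decide) (h.trans h3.symm))
      simpa using this
  -- parallel-row propagation
  have para : ∀ (v w : V) (i k : Fin 3) (e : Fin 3), G.Adj v w → i ≠ k →
      (∀ j, c ((v, i), j) = j + e) → ∃ e', ∀ j, c ((w, k), j) = j + e' := by
    intro v w i k e hvw hik hrow
    refine fin3_row e (fun j => c ((w, k), j)) (fun j j' h => rowinj (w, k) j j' h) ?_
    intro j
    rw [← hrow j]
    exact (cross v w i k j hvw hik).symm
  obtain ⟨eb2, hb2⟩ := para a b 0 2 0 hab (by decide) ra0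
  obtain ⟨eb1, hb1⟩ := para a b 0 1 0 hab (by decide) ra0
  obtain ⟨ea1, ha1⟩ := para b a 2 1 eb2 hab.symm (by decide) hb2
  obtain ⟨ea2, ha2⟩ := para b a 1 2 eb1 hab.symm (by decide) hb1
  obtain ⟨eb0, hb0⟩ := para a b 1 0 ea1 hab (by decide) ha1
  obtain ⟨ec0, hc0⟩ := para a t 1 0 ea1 hat (by decide) ha1
  obtain ⟨ec1, hc1⟩ := para a t 0 1 0 hat (by decide) ra0
  obtain ⟨ec2, hc2⟩ := para a t 0 2 0 hat (by decide) ra0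
  have hea1 : ea1 = 1 := by
    have h4 := ha1 0
    rw [h2] at h4
    simpa using h4.symm
  -- inequality constraints between the translation constants
  have ineq : ∀ (v w : V) (i k : Fin 3) (e e' : Fin 3), G.Adj v w → i ≠ k →
      (∀ j, c ((v, i), j) = j + e) → (∀ j, c ((w, k), j) = j + e') → e ≠ e' := by
    intro v w i k e e' hvw hik he he' hcontra
    apply cross v w i k 0 hvw hik
    rw [he 0, he' 0, hcontra]
  have key : ea2 = 2 :=
    fin3_tri 0 ea1 ea2 eb0 eb1 eb2 ec0 ec1 ec2 rfl hea1
      (ineq a b 0 1 0 eb1 hab (by decide) ra0 hb1)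
      (ineq a b 0 2 0 eb2 hab (by decide) ra0 hb2)
      (ineq a b 1 0 ea1 eb0 hab (by decide) ha1 hb0)
      (ineq a b 1 2 ea1 eb2 hab (by decide) ha1 hb2)
      (ineq a b 2 0 ea2 eb0 hab (by decide) ha2 hb0)
      (ineq a b 2 1 ea2 eb1 hab (by decide) ha2 hb1)
      (ineq a t 0 1 0 ec1 hat (by decide) ra0 hc1)
      (ineq a t 0 2 0 ec2 hat (by decide) ra0 hc2)
      (ineq a t 1 0 ea1 ec0 hat (by decide) ha1 hc0)
      (ineq a t 1 2 ea1 ec2 hat (by decide) ha1 hc2)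
      (ineq a t 2 0 ea2 ec0 hat (by decide) ha2 hc0)
      (ineq a t 2 1 ea2 ec1 hat (by decide) ha2 hc1)
      (ineq b t 0 1 eb0 ec1 hbt (by decide) hb0 hc1)
      (ineq b t 0 2 eb0 ec2 hbt (by decide) hb0 hc2)
      (ineq b t 1 0 eb1 ec0 hbt (by decide) hb1 hc0)
      (ineq b t 1 2 eb1 ec2 hbt (by decide) hb1 hc2)
      (ineq b t 2 0 eb2 ec0 hbt (by decide) hb2 hc0)
      (ineq b t 2 1 eb2 ec1 hbt (by decide) hb2 hc1)
  -- the fiber-pattern predicate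
  have hPa : ∀ i j : Fin 3, c ((a, i), j) = i + j := by
    intro i j
    fin_cases i
    · show c ((a, 0), j) = 0 + j
      rw [ra0 j]; exact add_comm j 0
    · show c ((a, 1), j) = 1 + j
      rw [ha1 j, hea1]; exact add_comm j 1
    · show c ((a, 2), j) = 2 + j
      rw [ha2 j, key]; exact add_comm j 2
  -- propagation along edges of G
  have step : ∀ v w : V, G.Adj v w → (∀ i j : Fin 3, c ((v, i), j) = i + j) →
      ∀ i j : Fin 3, c ((w, i), j) = i + j := by
    intro v w hvw hv i j
    refine fin3_force (c ((w, i), j)) i j ?_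
    intro i' hi'
    rw [← hv i' j]
    exact (cross v w i' i j hvw hi').symm
  have global : ∀ u v : V, G.Walk u v → (∀ i j : Fin 3, c ((u, i), j) = i + j) →
      ∀ i j : Fin 3, c ((v, i), j) = i + j := by
    intro u v w
    induction w with
    | nil => exact id
    | cons h _ ih => exact fun hu => ih (step _ _ h hu)
  have all : ∀ v (i j : Fin 3), c ((v, i), j) = i + j := by
    intro v
    exact (hconn a v).elim fun w => global a v w hPa
  funext x
  obtain ⟨⟨v, i⟩, j⟩ := x
  exact all v i j

theorem stmt16 {V : Type*} [Fintype V] (G : SimpleGraph V)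
    (hconn : G.Connected) (htri : ∃ a b c : V, G.Adj a b ∧ G.Adj b c ∧ G.Adj a c) :
    Fchi ((tensorProd G (⊤ : SimpleGraph (Fin 3))).boxProd (⊤ : SimpleGraph (Fin 3))) ≤ 3 := by
  classical
  obtain ⟨a, b, t, hab, hbt, hat⟩ := htri
  -- chromatic number of XX G is 3
  have hmem3 : 3 ∈ {s | ∃ c : (V × Fin 3) × Fin 3 → Fin s, properCol (XX G) s c} :=
    ⟨cc, cc_proper G⟩
  have hge : ∀ s ∈ {s | ∃ c : (V × Fin 3) × Fin 3 → Fin s, properCol (XX G) s c}, 3 ≤ s := by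
    rintro s ⟨c, hcs⟩
    have d12 : c ((a, 0), 0) ≠ c ((b, 1), 0) := hcs (adjXX1 0 hab (by decide))
    have d13 : c ((a, 0), 0) ≠ c ((t, 2), 0) := hcs (adjXX1 0 hat (by decide))
    have d23 : c ((b, 1), 0) ≠ c ((t, 2), 0) := hcs (adjXX1 0 hbt (by decide))
    have hcard : ({c ((a, 0), 0), c ((b, 1), 0), c ((t, 2), 0)} : Finset (Fin s)).card = 3 := by
      rw [Finset.card_insert_of_notMem (by simp [d12, d13]),
        Finset.card_insert_of_notMem (by simp [d23]), Finset.card_singleton]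
    calc 3 = ({c ((a, 0), 0), c ((b, 1), 0), c ((t, 2), 0)} : Finset (Fin s)).card := hcard.symm
      _ ≤ Fintype.card (Fin s) := Finset.card_le_univ _
      _ = s := Fintype.card_fin s
  have hchrom : chrom (XX G) = 3 := by
    unfold chrom
    exact le_antisymm (Nat.sInf_le hmem3) (le_csInf ⟨3, hmem3⟩ hge)
  show Fchi (XX G) ≤ 3
  unfold Fchi
  apply Nat.sInf_le
  refine ⟨({((a, 0), 0), ((a, 1), 0), ((a, 0), 1)} : Finset ((V × Fin 3) × Fin 3)), ?_, ?_⟩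
  · rw [Finset.card_insert_of_notMem (by simp), Finset.card_insert_of_notMem (by simp),
      Finset.card_singleton]
  · unfold IsForcingSet
    rw [hchrom]
    refine ⟨cc, cc, ⟨cc_proper G, fun v _ => rfl⟩, ?_⟩
    rintro c ⟨hc, hDc⟩
    refine cc_unique G hconn hab hbt hat c hc ?_ ?_ ?_
    · have := hDc ((a, 0), 0) (by simp)
      exact this.trans rfl
    · have := hDc ((a, 1), 0) (by simp)
      exact this.trans rfl
    · have := hDc ((a, 0), 1) (by simp)
      exact this.trans rfl
end

section
/- Let ω denote the clique number. Given a graph G, form H by adding two new vertices u and v, each adjacent to every vertex of G (but not to each other). Then F_ω(H) = F_ω(G) + 1, where F_ω(G) is the minimum size of a set of vertices contained in a unique maximum clique of G. -/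
open SimpleGraph

/-- The forcing clique number: minimum size of a set of vertices contained in a
unique maximum clique. -/
noncomputable def Fomega {V : Type*} [Fintype V] (G : SimpleGraph V) : ℕ :=
  sInf {k | ∃ S : Finset V, S.card = k ∧
    ∃! M : Finset V, (G.IsClique (M : Set V) ∧ M.card = G.cliqueNum) ∧ S ⊆ M}

/-- Add two new vertices `u, v`, each adjacent to every vertex of `G` but not
to each other. -/
def addTwo {V : Type*} (G : SimpleGraph V) : SimpleGraph (V ⊕ Fin 2) where
  Adj x y :=
    match x, y with
    | .inl u, .inl v => G.Adj u v
    | .inl _, .inr _ => True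
    | .inr _, .inl _ => True
    | .inr _, .inr _ => False
  symm := by
    constructor
    rintro (u | a) (v | b) h <;> simp_all <;> exact h.symm
  loopless := by
    constructor
    rintro (u | a) h <;> simp_all

section Aux

variable {V : Type*}

lemma addTwo_adj_inl_inl {G : SimpleGraph V} {a b : V} :
    (addTwo G).Adj (Sum.inl a) (Sum.inl b) ↔ G.Adj a b := Iff.rfl

lemma addTwo_adj_inl_inr {G : SimpleGraph V} {a : V} {i : Fin 2} :
    (addTwo G).Adj (Sum.inl a) (Sum.inr i) := trivial

lemma addTwo_adj_inr_inl {G : SimpleGraph V} {a : V} {i : Fin 2} :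
    (addTwo G).Adj (Sum.inr i) (Sum.inl a) := trivial

lemma addTwo_not_adj_inr_inr {G : SimpleGraph V} {i j : Fin 2} :
    ¬ (addTwo G).Adj (Sum.inr i) (Sum.inr j) := fun h => h

lemma clique_toLeft {G : SimpleGraph V} {M : Finset (V ⊕ Fin 2)}
    (h : (addTwo G).IsClique (M : Set (V ⊕ Fin 2))) :
    G.IsClique (M.toLeft : Set V) := by
  intro a ha b hb hab
  exact addTwo_adj_inl_inl.1 <|
    h (by simpa using ha) (by simpa using hb) (fun he => hab (Sum.inl_injective he))

lemma toRight_card_le {G : SimpleGraph V} {M : Finset (V ⊕ Fin 2)}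
    (h : (addTwo G).IsClique (M : Set (V ⊕ Fin 2))) : M.toRight.card ≤ 1 := by
  rw [Finset.card_le_one]
  intro i hi j hj
  by_contra hij
  exact addTwo_not_adj_inr_inr
    (h (by simpa using hi) (by simpa using hj) (fun he => hij (Sum.inr_injective he)))

lemma clique_disjSum {G : SimpleGraph V} {N : Finset V}
    (h : G.IsClique (N : Set V)) (i : Fin 2) :
    (addTwo G).IsClique ((N.disjSum {i} : Finset (V ⊕ Fin 2)) : Set (V ⊕ Fin 2)) := by
  rintro (a | p) hx (b | q) hy hxy
  · exact h (by simpa using hx) (by simpa using hy) (fun he => hxy (by rw [he]))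
  · exact addTwo_adj_inl_inr
  · exact addTwo_adj_inr_inl
  · exfalso
    apply hxy
    have hp : p = i := by simpa using hx
    have hq : q = i := by simpa using hy
    rw [hp, hq]

lemma addTwo_cliqueNum [Fintype V] (G : SimpleGraph V) :
    (addTwo G).cliqueNum = G.cliqueNum + 1 := by
  obtain ⟨s, hs⟩ := (addTwo G).exists_isNClique_cliqueNum
  obtain ⟨t, ht⟩ := G.exists_isNClique_cliqueNum
  have h1 : (addTwo G).cliqueNum ≤ G.cliqueNum + 1 := by
    have h4 := Finset.card_toLeft_add_card_toRight (u := s)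
    have h5 := (clique_toLeft hs.isClique).card_le_cliqueNum
    have h6 := toRight_card_le hs.isClique
    have := hs.card_eq
    omega
  have h2 : G.cliqueNum + 1 ≤ (addTwo G).cliqueNum := by
    have hc := (clique_disjSum ht.isClique 0).card_le_cliqueNum
    rwa [Finset.card_disjSum, Finset.card_singleton, ht.card_eq] at hc
  omega

lemma maxclique_iff [Fintype V] {G : SimpleGraph V} {M : Finset (V ⊕ Fin 2)} :
    ((addTwo G).IsClique (M : Set (V ⊕ Fin 2)) ∧ M.card = (addTwo G).cliqueNum) ↔
      (G.IsClique (M.toLeft : Set V) ∧ M.toLeft.card = G.cliqueNum) ∧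
        M.toRight.card = 1 := by
  constructor
  · rintro ⟨hc, hcard⟩
    have h1 := clique_toLeft hc
    have h2 := toRight_card_le hc
    have h3 := h1.card_le_cliqueNum
    have h4 := Finset.card_toLeft_add_card_toRight (u := M)
    rw [addTwo_cliqueNum] at hcard
    exact ⟨⟨h1, by omega⟩, by omega⟩
  · rintro ⟨⟨h1, h2⟩, h3⟩
    obtain ⟨i, hi⟩ := Finset.card_eq_one.1 h3
    have hM : M = M.toLeft.disjSum {i} := by rw [← hi, Finset.toLeft_disjSum_toRight]
    constructor
    · rw [hM]; exact clique_disjSum h1 i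
    · rw [hM, Finset.card_disjSum, Finset.card_singleton, addTwo_cliqueNum, h2]

lemma subset_iff_parts {S M : Finset (V ⊕ Fin 2)} :
    S ⊆ M ↔ S.toLeft ⊆ M.toLeft ∧ S.toRight ⊆ M.toRight := by
  constructor
  · exact fun h => ⟨Finset.toLeft_subset_toLeft h, Finset.toRight_subset_toRight h⟩
  · rintro ⟨h1, h2⟩ (a | b) hx
    · exact Finset.mem_toLeft.1 (h1 (Finset.mem_toLeft.2 hx))
    · exact Finset.mem_toRight.1 (h2 (Finset.mem_toRight.2 hx))

lemma fomega_set_nonempty [Fintype V] (G : SimpleGraph V) :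
    {k | ∃ S : Finset V, S.card = k ∧
      ∃! M : Finset V, (G.IsClique (M : Set V) ∧ M.card = G.cliqueNum) ∧ S ⊆ M}.Nonempty := by
  obtain ⟨t, ht⟩ := G.exists_isNClique_cliqueNum
  refine ⟨t.card, t, rfl, t, ⟨⟨ht.isClique, ht.card_eq⟩, subset_rfl⟩, ?_⟩
  rintro M ⟨⟨hc, hcard⟩, hsub⟩
  exact (Finset.eq_of_subset_of_card_le hsub (by rw [hcard, ht.card_eq])).symm

end Aux

theorem stmt19 {V : Type*} [Fintype V] (G : SimpleGraph V) :
    Fomega (addTwo G) = Fomega G + 1 := by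
  have hfin : ∀ j : Fin 2, j + 1 ≠ j := by decide
  apply le_antisymm
  · -- ≤
    have hmemG : Fomega G ∈ {k | ∃ S : Finset V, S.card = k ∧
        ∃! M : Finset V, (G.IsClique (M : Set V) ∧ M.card = G.cliqueNum) ∧ S ⊆ M} :=
      Nat.sInf_mem (fomega_set_nonempty G)
    obtain ⟨S', hS'card, M', ⟨⟨hM'c, hM'card⟩, hS'M'⟩, huniq⟩ := hmemG
    apply Nat.sInf_le
    refine ⟨S'.disjSum {0}, by simp [hS'card], M'.disjSum {0}, ⟨?_, ?_⟩, ?_⟩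
    · exact maxclique_iff.2 ⟨⟨by simpa using hM'c, by simpa using hM'card⟩, by simp⟩
    · exact subset_iff_parts.2 ⟨by simpa using hS'M', by simp⟩
    · rintro N ⟨hN, hSN⟩
      obtain ⟨⟨hNl, hNlcard⟩, hNr⟩ := maxclique_iff.1 hN
      obtain ⟨hl, hr⟩ := subset_iff_parts.1 hSN
      have h1 : N.toLeft = M' := huniq N.toLeft ⟨⟨hNl, hNlcard⟩, by simpa using hl⟩
      have h2 : N.toRight = ({0} : Finset (Fin 2)) :=
        (Finset.eq_of_subset_of_card_le (by simpa using hr) (by rw [hNr]; simp)).symm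
      rw [← Finset.toLeft_disjSum_toRight (u := N), h1, h2]
  · -- ≥
    have hmemH : Fomega (addTwo G) ∈ {k | ∃ S : Finset (V ⊕ Fin 2), S.card = k ∧
        ∃! M : Finset (V ⊕ Fin 2),
          ((addTwo G).IsClique (M : Set (V ⊕ Fin 2)) ∧ M.card = (addTwo G).cliqueNum) ∧
            S ⊆ M} :=
      Nat.sInf_mem (fomega_set_nonempty (addTwo G))
    obtain ⟨S, hScard, M, ⟨hMprop, hSM⟩, huniq⟩ := hmemH
    obtain ⟨⟨hMl, hMlcard⟩, hMr⟩ := maxclique_iff.1 hMprop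
    obtain ⟨i, hi⟩ := Finset.card_eq_one.1 hMr
    obtain ⟨hsl, hsr⟩ := subset_iff_parts.1 hSM
    have hStR : S.toRight = ({i} : Finset (Fin 2)) := by
      rcases Finset.eq_empty_or_nonempty S.toRight with he | ⟨j, hj⟩
      · exfalso
        have halt : M.toLeft.disjSum {i + 1} = M := by
          apply huniq
          refine ⟨maxclique_iff.2 ⟨⟨by simpa using hMl, by simpa using hMlcard⟩, by simp⟩, ?_⟩
          exact subset_iff_parts.2 ⟨by simpa using hsl, by simp [he]⟩
        have : ({i + 1} : Finset (Fin 2)) = {i} := by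
          rw [← hi, ← halt]; simp
        exact hfin i (Finset.singleton_injective this)
      · have hji : j = i := by
          have := hsr hj
          rw [hi] at this
          simpa using this
        subst hji
        refine Finset.Subset.antisymm (by rw [← hi]; exact hsr) ?_
        simpa using hj
    have hcards : S.toLeft.card + 1 = S.card := by
      have := Finset.card_toLeft_add_card_toRight (u := S)
      rw [hStR, Finset.card_singleton] at this
      omega
    have hmem : S.toLeft.card ∈ {k | ∃ S : Finset V, S.card = k ∧
        ∃! M : Finset V, (G.IsClique (M : Set V) ∧ M.card = G.cliqueNum) ∧ S ⊆ M} := by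
      refine ⟨S.toLeft, rfl, M.toLeft, ⟨⟨hMl, hMlcard⟩, hsl⟩, ?_⟩
      rintro N ⟨⟨hNc, hNcard⟩, hsub⟩
      have hkey : N.disjSum {i} = M := by
        apply huniq
        refine ⟨maxclique_iff.2 ⟨⟨by simpa using hNc, by simpa using hNcard⟩, by simp⟩, ?_⟩
        exact subset_iff_parts.2 ⟨by simpa using hsub, by rw [hStR]; simp⟩
      have := congrArg Finset.toLeft hkey
      simpa using this
    have hle : Fomega G ≤ S.toLeft.card := Nat.sInf_le hmem
    omega
end
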